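/- arXiv:1311.3013 — 3 statements merged into one kernel-verified Lean document; each statement's English description precedes it below -/
import Mathlib

section
/- (Uniformity lemma) For any L_EA-theory T, the L_{ω·ω}-theory T^⊕ is uniform. -/
namespace FCT

/-- Terms of the language `L_PA = (0, S, +, ·)`.  Variables are indexed by `ℕ`. -/
inductive Term : Type where
  | var : ℕ → Term
  | zero : Term
  | succ : Term → Term
  | add : Term → Term → Term
  | mul : Term → Term → Term

/-- Formulas of `L_PA` extended by a family of unary operators indexed by `Op`
(the base logic).  `op K φ` is the formula `Kφ`. -/
inductive Formula (Op : Type) : Type where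
  | eq : Term → Term → Formula Op
  | imp : Formula Op → Formula Op → Formula Op
  | not : Formula Op → Formula Op
  | all : ℕ → Formula Op → Formula Op
  | op : Op → Formula Op → Formula Op

/-- The ordinals below `ω·ω`, encoded as pairs: `(a, b)` represents `ω·a + b`,
with the lexicographic order. -/
abbrev Ord2 : Type := ℕ ×ₗ ℕ

/-- The ordinal `ω·a + b` as an element of `Ord2`. -/
def omul (a b : ℕ) : Ord2 := toLex (a, b)

/-- Formulas of `L_EA`: one operator `K`. -/
abbrev LEA : Type := Formula Unit

/-- Formulas of `L_{ω·ω}`: operators `K^α` for `α < ω·ω`. -/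
abbrev LOO : Type := Formula Ord2

/-- `Kφ` in `L_EA`. -/
def KK (φ : LEA) : LEA := .op () φ

/-- Variables occurring in a term. -/
def Term.vars : Term → Set ℕ
  | .var x => {x}
  | .zero => ∅
  | .succ t => t.vars
  | .add t u => t.vars ∪ u.vars
  | .mul t u => t.vars ∪ u.vars

/-- Free variables of a formula (`FV(Kφ) = FV(φ)`). -/
def Formula.free {Op : Type} : Formula Op → Set ℕ
  | .eq t u => t.vars ∪ u.vars
  | .imp φ ψ => φ.free ∪ ψ.free
  | .not φ => φ.free
  | .all x φ => φ.free \ {x}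
  | .op _ φ => φ.free

/-- A sentence is a formula with no free variables. -/
def Formula.IsSentence {Op : Type} (φ : Formula Op) : Prop := φ.free = ∅

/-- A theory is a set of sentences. -/
def IsTheory {Op : Type} (T : Set (Formula Op)) : Prop := ∀ φ ∈ T, φ.IsSentence

/-- Substitution of the term `u` for the variable `x` in a term. -/
def Term.subst (x : ℕ) (u : Term) : Term → Term
  | .var y => if y = x then u else .var y
  | .zero => .zero
  | .succ t => .succ (Term.subst x u t)
  | .add t₁ t₂ => .add (Term.subst x u t₁) (Term.subst x u t₂)
  | .mul t₁ t₂ => .mul (Term.subst x u t₁) (Term.subst x u t₂)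

/-- Substitution `φ(x|u)` of the term `u` for all free occurrences of `x` in `φ`. -/
def Formula.subst {Op : Type} (x : ℕ) (u : Term) : Formula Op → Formula Op
  | .eq t₁ t₂ => .eq (Term.subst x u t₁) (Term.subst x u t₂)
  | .imp φ ψ => .imp (Formula.subst x u φ) (Formula.subst x u ψ)
  | .not φ => .not (Formula.subst x u φ)
  | .all y φ => if y = x then .all y φ else .all y (Formula.subst x u φ)
  | .op K φ => .op K (Formula.subst x u φ)

/-- The term `u` is substitutable for the variable `x` in the formula. -/
def Formula.Substitutable {Op : Type} (x : ℕ) (u : Term) : Formula Op → Prop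
  | .eq _ _ => True
  | .imp φ ψ => φ.Substitutable x u ∧ ψ.Substitutable x u
  | .not φ => φ.Substitutable x u
  | .all y φ => x = y ∨ x ∉ φ.free ∨ (y ∉ u.vars ∧ φ.Substitutable x u)
  | .op _ φ => φ.Substitutable x u

/-- Matching of two variables relative to a list of pairs of renamed bound variables. -/
def varMatch : List (ℕ × ℕ) → ℕ → ℕ → Prop
  | [], x, y => x = y
  | (a, b) :: ρ, x, y => (x = a ∧ y = b) ∨ (x ≠ a ∧ y ≠ b ∧ varMatch ρ x y)

/-- Alphabetic matching of terms relative to a list of pairs of renamed bound variables. -/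
def Term.alpha (ρ : List (ℕ × ℕ)) : Term → Term → Prop
  | .var x, .var y => varMatch ρ x y
  | .zero, .zero => True
  | .succ t, .succ u => t.alpha ρ u
  | .add t₁ t₂, .add u₁ u₂ => t₁.alpha ρ u₁ ∧ t₂.alpha ρ u₂
  | .mul t₁ t₂, .mul u₁ u₂ => t₁.alpha ρ u₁ ∧ t₂.alpha ρ u₂
  | _, _ => False

/-- Alphabetic matching of formulas relative to a list of pairs of renamed bound variables. -/
def Formula.alpha {Op : Type} (ρ : List (ℕ × ℕ)) : Formula Op → Formula Op → Prop
  | .eq t₁ t₂, .eq u₁ u₂ => t₁.alpha ρ u₁ ∧ t₂.alpha ρ u₂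
  | .imp φ₁ φ₂, .imp ψ₁ ψ₂ => φ₁.alpha ρ ψ₁ ∧ φ₂.alpha ρ ψ₂
  | .not φ, .not ψ => φ.alpha ρ ψ
  | .all x φ, .all y ψ => φ.alpha ((x, y) :: ρ) ψ
  | .op K φ, .op K' ψ => K = K' ∧ φ.alpha ρ ψ
  | _, _ => False

/-- `ψ` is an alphabetic variant of `φ`: it is obtained from `φ` by renaming
bound variables while respecting the binding of the quantifiers. -/
def Formula.AlphaVariant {Op : Type} (φ ψ : Formula Op) : Prop := φ.alpha [] ψ

/-- The data of a structure for the base logic over `L_PA` extended by the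
operators `Op`: a first-order part together with a truth valuation
`opSat K φ s` ("`M ⊨ Kφ[s]`") for operator-prefixed formulas. -/
structure PreStruc (Op : Type) : Type 1 where
  U : Type
  zero : U
  succ : U → U
  add : U → U → U
  mul : U → U → U
  opSat : Op → Formula Op → (ℕ → U) → Prop

/-- Evaluation of terms. -/
def Term.eval {Op : Type} (M : PreStruc Op) (s : ℕ → M.U) : Term → M.U
  | .var x => s x
  | .zero => M.zero
  | .succ t => M.succ (t.eval M s)
  | .add t u => M.add (t.eval M s) (u.eval M s)
  | .mul t u => M.mul (t.eval M s) (u.eval M s)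

/-- Satisfaction `M ⊨ φ[s]`: as in first-order logic on non-operator formulas,
and given by `opSat` on operator-prefixed formulas. -/
def Sat {Op : Type} (M : PreStruc Op) : Formula Op → (ℕ → M.U) → Prop
  | .eq t u, s => t.eval M s = u.eval M s
  | .imp φ ψ, s => Sat M φ s → Sat M ψ s
  | .not φ, s => ¬ Sat M φ s
  | .all x φ, s => ∀ a : M.U, Sat M φ (Function.update s x a)
  | .op K φ, s => M.opSat K φ s

/-- `M` is a genuine structure of the base logic: its operator valuation
(1) depends only on the values of the assignment on the free variables,
(2) is invariant under renaming of bound variables, and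
(3) satisfies weak substitution. -/
def IsStruc {Op : Type} (M : PreStruc Op) : Prop :=
  (∀ (K : Op) (φ : Formula Op) (s t : ℕ → M.U),
      (∀ x ∈ φ.free, s x = t x) → (M.opSat K φ s ↔ M.opSat K φ t)) ∧
  (∀ (K : Op) (φ ψ : Formula Op) (s : ℕ → M.U),
      φ.AlphaVariant ψ → (M.opSat K φ s ↔ M.opSat K ψ s)) ∧
  (∀ (K : Op) (φ : Formula Op) (x y : ℕ) (s : ℕ → M.U),
      φ.Substitutable x (.var y) →
      (M.opSat K (φ.subst x (.var y)) s ↔ M.opSat K φ (Function.update s x (s y))))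

/-- A formula is valid if it holds in every structure under every assignment. -/
def Valid {Op : Type} (φ : Formula Op) : Prop :=
  ∀ M : PreStruc Op, IsStruc M → ∀ s : ℕ → M.U, Sat M φ s

/-- `T ⊨ φ`: every structure satisfying all members of `T` (under every
assignment) satisfies `φ` under every assignment. -/
def Models {Op : Type} (T : Set (Formula Op)) (φ : Formula Op) : Prop :=
  ∀ M : PreStruc Op, IsStruc M → (∀ ψ ∈ T, ∀ s : ℕ → M.U, Sat M ψ s) →
    ∀ s : ℕ → M.U, Sat M φ s

/-- `M ⊨ T`. -/
def SatTheory {Op : Type} (M : PreStruc Op) (T : Set (Formula Op)) : Prop :=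
  ∀ φ ∈ T, ∀ s : ℕ → M.U, Sat M φ s

/-- The numeral `n̄`. -/
def numeral : ℕ → Term
  | 0 => .zero
  | n + 1 => .succ (numeral n)

/-- Helper for `φ^s`: replace every free occurrence of a variable `x` not in the
list `B` of bound variables by the numeral for `s x`. -/
def Term.numSub (s : ℕ → ℕ) (B : List ℕ) : Term → Term
  | .var x => if x ∈ B then .var x else numeral (s x)
  | .zero => .zero
  | .succ t => .succ (t.numSub s B)
  | .add t u => .add (t.numSub s B) (u.numSub s B)
  | .mul t u => .mul (t.numSub s B) (u.numSub s B)

/-- Helper for `φ^s` (carrying the list of bound variables). -/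
def Formula.numSub {Op : Type} (s : ℕ → ℕ) : List ℕ → Formula Op → Formula Op
  | B, .eq t u => .eq (t.numSub s B) (u.numSub s B)
  | B, .imp φ ψ => .imp (φ.numSub s B) (ψ.numSub s B)
  | B, .not φ => .not (φ.numSub s B)
  | B, .all x φ => .all x (φ.numSub s (x :: B))
  | B, .op K φ => .op K (φ.numSub s B)

/-- `φ^s`: the sentence obtained by substituting the numeral for `s x` for each
free occurrence of each variable `x` in `φ`. -/
def assignSub {Op : Type} (s : ℕ → ℕ) (φ : Formula Op) : Formula Op :=
  φ.numSub s []

/-- The intended structure `𝒩_T` of an `L_EA`-theory `T`: standard first-order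
part and `𝒩_T ⊨ Kφ[s]` iff `T ⊨ φ^s`. -/
def NStruc (T : Set LEA) : PreStruc Unit where
  U := ℕ
  zero := 0
  succ := Nat.succ
  add := (· + ·)
  mul := (· * ·)
  opSat := fun _ φ s => Models T (assignSub s φ)

/-- `T` is true: `𝒩_T ⊨ T`. -/
def TheoryTrue (T : Set LEA) : Prop := SatTheory (NStruc T) T

/-- `On(φ)`: the set of `α < ω·ω` such that `K^α` occurs in `φ`. -/
def Formula.On : LOO → Set Ord2
  | .eq _ _ => ∅
  | .imp φ ψ => φ.On ∪ ψ.On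
  | .not φ => φ.On
  | .all _ φ => φ.On
  | .op α φ => insert α φ.On

/-- `T ∩ α`: the members of `T` all of whose superscripts are `< α`. -/
def cut (T : Set LOO) (α : Ord2) : Set LOO := {φ | φ ∈ T ∧ ∀ β ∈ φ.On, β < α}

/-- The intended structure `𝓜_T` of an `L_{ω·ω}`-theory `T`: standard
first-order part and `𝓜_T ⊨ K^αφ[s]` iff `T∩α ⊨ φ^s`. -/
def MStruc (T : Set LOO) : PreStruc Ord2 where
  U := ℕ
  zero := 0
  succ := Nat.succ
  add := (· + ·)
  mul := (· * ·)
  opSat := fun α φ s => Models (cut T α) (assignSub s φ)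

/-- The least element of a set `A ⊆ ω·ω` (junk value if `A` is empty):
first minimize the `ω`-coefficient, then the finite part. -/
noncomputable def leastIn (A : Set Ord2) : Ord2 :=
  let a := sInf {a : ℕ | ∃ b : ℕ, toLex (a, b) ∈ A}
  toLex (a, sInf {b : ℕ | toLex (a, b) ∈ A})

/-- The stratifier given by `X ⊆ ω·ω`: fixes atomic formulas, commutes with
`→`, `¬`, `∀`, and sends `Kφ₀` to `K^α φ₀⁺` where `α` is the least element of
`X \ On(φ₀⁺)`. -/
noncomputable def stratify (X : Set Ord2) : LEA → LOO
  | .eq t u => .eq t u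
  | .imp φ ψ => .imp (stratify X φ) (stratify X ψ)
  | .not φ => .not (stratify X φ)
  | .all x φ => .all x (stratify X φ)
  | .op _ φ => .op (leastIn (X \ (stratify X φ).On)) (stratify X φ)

/-- A stratifier is the map given by some infinite `X ⊆ ω·ω`. -/
def IsStratifier (f : LEA → LOO) : Prop :=
  ∃ X : Set Ord2, X.Infinite ∧ f = stratify X

/-- `T^⊕ = { φ⁺ : φ ∈ T, ⁺ a stratifier }`. -/
def oplus (T : Set LEA) : Set LOO :=
  {ψ | ∃ φ ∈ T, ∃ f : LEA → LOO, IsStratifier f ∧ ψ = f φ}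

/-- The veristratifier: the stratifier given by `X = {ω·1, ω·2, ω·3, …}`. -/
noncomputable def veristratifier : LEA → LOO :=
  stratify {α : Ord2 | ∃ n : ℕ, α = omul (n + 1) 0}

/-- `φ⁻`: change every `K^α` into `K`. -/
def Formula.down : LOO → LEA
  | .eq t u => .eq t u
  | .imp φ ψ => .imp φ.down ψ.down
  | .not φ => .not φ.down
  | .all x φ => .all x φ.down
  | .op _ φ => .op () φ.down

/-- `M⁺` for an `L_{ω·ω}`-structure `M` and a stratifier `⁺`: same universe and
`L_PA`-part, and `M⁺ ⊨ Kφ[s]` iff `M ⊨ (Kφ)⁺[s]`. -/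
def upStruc (M : PreStruc Ord2) (f : LEA → LOO) : PreStruc Unit where
  U := M.U
  zero := M.zero
  succ := M.succ
  add := M.add
  mul := M.mul
  opSat := fun _ φ s => Sat M (f (.op () φ)) s

/-- `M⁻` for an `L_EA`-structure `M`: same universe and `L_PA`-part, and
`M⁻ ⊨ K^αφ[s]` iff `M ⊨ K(φ⁻)[s]`. -/
def downStruc (M : PreStruc Unit) : PreStruc Ord2 where
  U := M.U
  zero := M.zero
  succ := M.succ
  add := M.add
  mul := M.mul
  opSat := fun _ φ s => Sat M (.op () φ.down) s

open Classical in
/-- `h(φ)`: replace every occurrence of `K^α` with `α ∈ X` by `K^{h(α)}`. -/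
noncomputable def mapOps (X : Set Ord2) (h : Ord2 → Ord2) : LOO → LOO
  | .eq t u => .eq t u
  | .imp φ ψ => .imp (mapOps X h φ) (mapOps X h ψ)
  | .not φ => .not (mapOps X h φ)
  | .all x φ => .all x (mapOps X h φ)
  | .op α φ => .op (if α ∈ X then h α else α) (mapOps X h φ)

/-- `h : X → ω·ω` is order preserving. -/
def OrdPresOn (X : Set Ord2) (h : Ord2 → Ord2) : Prop :=
  ∀ a ∈ X, ∀ b ∈ X, a < b → h a < h b

/-- A uniform `L_{ω·ω}`-theory. -/
def Uniform (T : Set LOO) : Prop :=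
  ∀ (X : Set Ord2) (h : Ord2 → Ord2), OrdPresOn X h →
    ∀ φ ∈ T, φ.On ⊆ X → mapOps X h φ ∈ T

/-- `h(M)`: same universe and `L_PA`-part as `M`, and
`h(M) ⊨ K^αφ[s]` iff `M ⊨ h(K^αφ)[s]`. -/
noncomputable def hStruc (X : Set Ord2) (h : Ord2 → Ord2) (M : PreStruc Ord2) :
    PreStruc Ord2 where
  U := M.U
  zero := M.zero
  succ := M.succ
  add := M.add
  mul := M.mul
  opSat := fun α φ s => Sat M (mapOps X h (.op α φ)) s

/-- The depth of nesting of the operators. -/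
def Formula.depth {Op : Type} : Formula Op → ℕ
  | .eq _ _ => 0
  | .imp φ ψ => max φ.depth ψ.depth
  | .not φ => φ.depth
  | .all _ φ => φ.depth
  | .op _ φ => φ.depth + 1

/-- `∀x₁ ⋯ ∀xₙ φ`. -/
def Formula.alls {Op : Type} : List ℕ → Formula Op → Formula Op
  | [], φ => φ
  | x :: l, φ => .all x (Formula.alls l φ)

/-- `ψ` is a universal closure of `φ`: a sentence of the form `∀x₁ ⋯ ∀xₙ φ`. -/
def IsUClosure {Op : Type} (φ ψ : Formula Op) : Prop :=
  ψ.IsSentence ∧ ∃ l : List ℕ, ψ = Formula.alls l φ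

/-- The schema `E₁`: universal closures of `Kφ`, `φ` valid. -/
def E1 : Set LEA := {χ | ∃ φ : LEA, Valid φ ∧ IsUClosure (KK φ) χ}

/-- The schema `E₂`: universal closures of `K(φ→ψ) → Kφ → Kψ`. -/
def E2 : Set LEA :=
  {χ | ∃ φ ψ : LEA, IsUClosure (.imp (KK (.imp φ ψ)) (.imp (KK φ) (KK ψ))) χ}

/-- The schema `E′₂`: universal closures of `K(φ→ψ) → Kφ → Kψ` with
`depth(φ) ≤ depth(ψ)`. -/
def E2' : Set LEA :=
  {χ | ∃ φ ψ : LEA, φ.depth ≤ ψ.depth ∧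
    IsUClosure (.imp (KK (.imp φ ψ)) (.imp (KK φ) (KK ψ))) χ}

/-- The schema `E₃`: universal closures of `Kφ → φ`. -/
def E3 : Set LEA := {χ | ∃ φ : LEA, IsUClosure (.imp (KK φ) φ) χ}

/-- The Assigned Validity schema: all `φ^s` with `φ` valid, `s : ℕ → ℕ`. -/
def AssignedValidity : Set LEA :=
  {χ | ∃ (φ : LEA) (s : ℕ → ℕ), Valid φ ∧ χ = assignSub s φ}

/-- `K(T₀) = { Kφ : φ ∈ T₀ }`. -/
def KSet (T : Set LEA) : Set LEA := {χ | ∃ φ ∈ T, χ = KK φ}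

/-- Membership in the smallest `K`-closed set containing `S`. -/
inductive KClosureMem (S : Set LEA) : LEA → Prop
  | base {φ : LEA} : φ ∈ S → KClosureMem S φ
  | k {φ : LEA} : KClosureMem S φ → KClosureMem S (KK φ)

/-- The smallest `K`-closed theory containing `S`. -/
def KClosure (S : Set LEA) : Set LEA := {φ | KClosureMem S φ}

/-- `T₀` is upgeneric: `𝓜_{T^⊕} ⊨ T₀^⊕` for every `L_EA`-theory `T ⊇ T₀`. -/
def Upgeneric (T₀ : Set LEA) : Prop :=
  ∀ T : Set LEA, IsTheory T → T₀ ⊆ T → SatTheory (MStruc (oplus T)) (oplus T₀)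

/-- A concrete Gödel numbering of terms. -/
def encodeTerm : Term → ℕ
  | .var x => Nat.pair 0 x
  | .zero => Nat.pair 1 0
  | .succ t => Nat.pair 2 (encodeTerm t)
  | .add t u => Nat.pair 3 (Nat.pair (encodeTerm t) (encodeTerm u))
  | .mul t u => Nat.pair 4 (Nat.pair (encodeTerm t) (encodeTerm u))

/-- A concrete Gödel numbering of `L_EA`-formulas. -/
def encodeLEA : LEA → ℕ
  | .eq t u => Nat.pair 0 (Nat.pair (encodeTerm t) (encodeTerm u))
  | .imp φ ψ => Nat.pair 1 (Nat.pair (encodeLEA φ) (encodeLEA ψ))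
  | .not φ => Nat.pair 2 (encodeLEA φ)
  | .all x φ => Nat.pair 3 (Nat.pair x (encodeLEA φ))
  | .op _ φ => Nat.pair 4 (encodeLEA φ)

/-- `T` is recursively enumerable: the set of Gödel numbers of its members is r.e. -/
def RETheory (T : Set LEA) : Prop := REPred fun n => ∃ φ ∈ T, encodeLEA φ = n

/-- `T₀` is r.e.-upgeneric: `T₀` is r.e. and `𝓜_{T^⊕} ⊨ T₀^⊕` for every r.e.
`L_EA`-theory `T ⊇ T₀`. -/
def REUpgeneric (T₀ : Set LEA) : Prop :=
  RETheory T₀ ∧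
    ∀ T : Set LEA, IsTheory T → RETheory T → T₀ ⊆ T →
      SatTheory (MStruc (oplus T)) (oplus T₀)

/-! ### Auxiliary development for the uniformity lemma -/

lemma leastIn_mem {A : Set Ord2} (hA : A.Nonempty) : leastIn A ∈ A := by
  obtain ⟨x, hx⟩ := hA
  have h1 : {a : ℕ | ∃ b : ℕ, toLex (a, b) ∈ A}.Nonempty :=
    ⟨(ofLex x).1, (ofLex x).2, hx⟩
  have h2 := Nat.sInf_mem h1
  obtain ⟨b, hb⟩ := h2
  have h3 : {b : ℕ | toLex (sInf {a : ℕ | ∃ b : ℕ, toLex (a, b) ∈ A}, b) ∈ A}.Nonempty :=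
    ⟨b, hb⟩
  exact Nat.sInf_mem h3

lemma leastIn_le {A : Set Ord2} {x : Ord2} (hx : x ∈ A) : leastIn A ≤ x := by
  have h1 : sInf {a : ℕ | ∃ b : ℕ, toLex (a, b) ∈ A} ≤ (ofLex x).1 :=
    Nat.sInf_le ⟨(ofLex x).2, hx⟩
  rcases lt_or_eq_of_le h1 with h | h
  · show toLex _ ≤ toLex (ofLex x)
    rw [Prod.Lex.le_iff]
    exact Or.inl h
  · show toLex _ ≤ toLex (ofLex x)
    rw [Prod.Lex.le_iff]
    refine Or.inr ⟨h, ?_⟩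
    refine Nat.sInf_le ?_
    show toLex (sInf {a : ℕ | ∃ b : ℕ, toLex (a, b) ∈ A}, (ofLex x).2) ∈ A
    rw [h]
    exact hx

lemma leastIn_eq {A : Set Ord2} {x : Ord2} (hx : x ∈ A) (hle : ∀ y ∈ A, x ≤ y) :
    leastIn A = x :=
  le_antisymm (leastIn_le hx) (hle _ (leastIn_mem ⟨x, hx⟩))

/-- The `n`-th element of a subset of `ω·ω`. -/
noncomputable def nthOrd : Set Ord2 → ℕ → Ord2
  | X, 0 => leastIn X
  | X, n + 1 => nthOrd (X \ {leastIn X}) n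

lemma nthOrd_mem {X : Set Ord2} (hX : X.Infinite) : ∀ n, nthOrd X n ∈ X := by
  intro n
  induction n generalizing X with
  | zero => exact leastIn_mem hX.nonempty
  | succ n ih =>
    have h1 : (X \ {leastIn X}).Infinite := hX.diff (Set.finite_singleton _)
    exact (ih h1).1

lemma nthOrd_lt_succ {X : Set Ord2} (hX : X.Infinite) : ∀ n, nthOrd X n < nthOrd X (n + 1) := by
  intro n
  induction n generalizing X with
  | zero =>
    have h1 : (X \ {leastIn X}).Infinite := hX.diff (Set.finite_singleton _)
    have h2 : nthOrd X 1 ∈ X \ {leastIn X} := leastIn_mem h1.nonempty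
    exact lt_of_le_of_ne (leastIn_le h2.1) (fun h => h2.2 h.symm)
  | succ n ih =>
    have h1 : (X \ {leastIn X}).Infinite := hX.diff (Set.finite_singleton _)
    exact ih h1

lemma nthOrd_strictMono {X : Set Ord2} (hX : X.Infinite) : StrictMono (nthOrd X) :=
  strictMono_nat_of_lt_succ (nthOrd_lt_succ hX)

lemma nthOrd_image_Iio_succ (X : Set Ord2) (m : ℕ) :
    nthOrd X '' Set.Iio (m + 1) =
      insert (leastIn X) (nthOrd (X \ {leastIn X}) '' Set.Iio m) := by
  ext x
  simp only [Set.mem_image, Set.mem_Iio, Set.mem_insert_iff]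
  constructor
  · rintro ⟨i, hi, rfl⟩
    cases i with
    | zero => exact Or.inl rfl
    | succ j => exact Or.inr ⟨j, by omega, rfl⟩
  · rintro (rfl | ⟨j, hj, rfl⟩)
    · exact ⟨0, by omega, rfl⟩
    · exact ⟨j + 1, by omega, rfl⟩

lemma leastIn_diff_image {X : Set Ord2} (hX : X.Infinite) :
    ∀ m, leastIn (X \ nthOrd X '' Set.Iio m) = nthOrd X m := by
  intro m
  induction m generalizing X with
  | zero =>
    have h0 : Set.Iio (0:ℕ) = ∅ := by ext k; simp
    rw [h0, Set.image_empty, Set.diff_empty]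
    rfl
  | succ m ih =>
    have h1 : (X \ {leastIn X}).Infinite := hX.diff (Set.finite_singleton _)
    rw [nthOrd_image_Iio_succ, ← Set.singleton_union, ← Set.diff_diff]
    exact ih h1

lemma leastIn_range {e : ℕ → Ord2} (he : StrictMono e) : leastIn (Set.range e) = e 0 := by
  refine leastIn_eq ⟨0, rfl⟩ ?_
  rintro y ⟨k, rfl⟩
  exact he.monotone (Nat.zero_le k)

lemma nthOrd_range {e : ℕ → Ord2} (he : StrictMono e) : ∀ i, nthOrd (Set.range e) i = e i := by
  intro i
  induction i generalizing e with
  | zero => exact leastIn_range he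
  | succ i ih =>
    have h1 : Set.range e \ {leastIn (Set.range e)} = Set.range (fun j => e (j + 1)) := by
      rw [leastIn_range he]
      ext x
      simp only [Set.mem_diff, Set.mem_range, Set.mem_singleton_iff]
      constructor
      · rintro ⟨⟨k, rfl⟩, hne⟩
        cases k with
        | zero => exact absurd rfl hne
        | succ j => exact ⟨j, rfl⟩
      · rintro ⟨j, rfl⟩
        exact ⟨⟨j + 1, rfl⟩, ne_of_gt (he (Nat.succ_pos j))⟩
    show nthOrd (Set.range e \ {leastIn (Set.range e)}) i = e (i + 1)
    rw [h1]
    exact ih (fun a b hab => he (by omega))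

open Classical in
lemma mapOps_op (X : Set Ord2) (h : Ord2 → Ord2) (α : Ord2) (φ : LOO) :
    mapOps X h (.op α φ) = .op (if α ∈ X then h α else α) (mapOps X h φ) := rfl

/-- The number of superscripts used by a stratifier on a formula. -/
def opNeed : LEA → ℕ
  | .eq _ _ => 0
  | .imp φ ψ => max (opNeed φ) (opNeed ψ)
  | .not φ => opNeed φ
  | .all _ φ => opNeed φ
  | .op _ φ => opNeed φ + 1

lemma strat_On {X : Set Ord2} (hX : X.Infinite) :
    ∀ φ : LEA, (stratify X φ).On = nthOrd X '' Set.Iio (opNeed φ) := by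
  intro φ
  induction φ with
  | eq t u =>
    have h0 : Set.Iio (0:ℕ) = ∅ := by ext k; simp
    show (∅ : Set Ord2) = nthOrd X '' Set.Iio 0
    rw [h0, Set.image_empty]
  | imp φ ψ ihφ ihψ =>
    have hu : Set.Iio (opNeed φ) ∪ Set.Iio (opNeed ψ)
        = Set.Iio (max (opNeed φ) (opNeed ψ)) := by
      ext k; simp only [Set.mem_union, Set.mem_Iio, lt_max_iff]
    show (stratify X φ).On ∪ (stratify X ψ).On = _
    rw [ihφ, ihψ, ← Set.image_union, hu]
    rfl
  | not φ ih => exact ih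
  | all x φ ih => exact ih
  | op K φ ih =>
    show insert (leastIn (X \ (stratify X φ).On)) (stratify X φ).On = _
    rw [ih, leastIn_diff_image hX]
    have h2 : Set.Iio (opNeed φ + 1) = insert (opNeed φ) (Set.Iio (opNeed φ)) := by
      ext k; simp only [Set.mem_Iio, Set.mem_insert_iff]; omega
    show _ = nthOrd X '' Set.Iio (opNeed (.op K φ))
    rw [show opNeed (.op K φ) = opNeed φ + 1 from rfl, h2, Set.image_insert_eq]

lemma strat_congr {X₁ X₂ : Set Ord2} (h₁ : X₁.Infinite) (h₂ : X₂.Infinite)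
    (g : Ord2 → Ord2) (N : ℕ) (hg : ∀ i < N, g (nthOrd X₁ i) = nthOrd X₂ i) :
    ∀ φ : LEA, opNeed φ ≤ N → stratify X₂ φ = mapOps Set.univ g (stratify X₁ φ) := by
  intro φ
  induction φ with
  | eq t u => intro _; rfl
  | imp φ ψ ihφ ihψ =>
    intro hN
    have hN' : max (opNeed φ) (opNeed ψ) ≤ N := hN
    show Formula.imp (stratify X₂ φ) (stratify X₂ ψ) = _
    rw [ihφ (le_trans (le_max_left _ _) hN'), ihψ (le_trans (le_max_right _ _) hN')]
    rfl
  | not φ ih =>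
    intro hN
    show Formula.not (stratify X₂ φ) = _
    rw [ih hN]; rfl
  | all x φ ih =>
    intro hN
    show Formula.all x (stratify X₂ φ) = _
    rw [ih hN]; rfl
  | op K φ ih =>
    intro hN
    have hN' : opNeed φ + 1 ≤ N := hN
    show Formula.op (leastIn (X₂ \ (stratify X₂ φ).On)) (stratify X₂ φ) = _
    rw [strat_On h₂, leastIn_diff_image h₂, ih (by omega)]
    show _ = mapOps Set.univ g
      (Formula.op (leastIn (X₁ \ (stratify X₁ φ).On)) (stratify X₁ φ))
    rw [strat_On h₁, leastIn_diff_image h₁, mapOps_op,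
      if_pos (Set.mem_univ _), hg _ (by omega)]

open Classical in
lemma mapOps_congr {X₁ X₂ : Set Ord2} {h₁ h₂ : Ord2 → Ord2} :
    ∀ φ : LOO, (∀ α ∈ φ.On,
      (if α ∈ X₁ then h₁ α else α) = (if α ∈ X₂ then h₂ α else α)) →
    mapOps X₁ h₁ φ = mapOps X₂ h₂ φ := by
  intro φ
  induction φ with
  | eq t u => intro _; rfl
  | imp φ ψ ihφ ihψ =>
    intro hα
    show Formula.imp (mapOps X₁ h₁ φ) (mapOps X₁ h₁ ψ) = _
    rw [ihφ (fun α hαm => hα α (Or.inl hαm)), ihψ (fun α hαm => hα α (Or.inr hαm))]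
    rfl
  | not φ ih =>
    intro hα
    show Formula.not (mapOps X₁ h₁ φ) = _
    rw [ih hα]; rfl
  | all x φ ih =>
    intro hα
    show Formula.all x (mapOps X₁ h₁ φ) = _
    rw [ih hα]; rfl
  | op α φ ih =>
    intro hα
    rw [mapOps_op, mapOps_op, ih (fun β hβ => hα β (Set.mem_insert_of_mem _ hβ)),
      hα α (Set.mem_insert _ _)]

/-- The uniformity lemma: for any `L_EA`-theory `T`, `T^⊕` is uniform. -/
theorem oplus_uniform (T : Set LEA) (hT : IsTheory T) : Uniform (oplus T) := by
  classical
  intro X h hOP ψ hψ hOnX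
  obtain ⟨φ, hφT, f, ⟨X', hX', rfl⟩, rfl⟩ := hψ
  set n := opNeed φ with hn
  have hOn := strat_On hX' φ
  have hmemX : ∀ i < n, nthOrd X' i ∈ X := by
    intro i hi
    exact hOnX (hOn ▸ ⟨i, hi, rfl⟩)
  set C : ℕ := if n = 0 then 0 else (ofLex (h (nthOrd X' (n - 1)))).1 + 1 with hC
  set e : ℕ → Ord2 := fun i => if i < n then h (nthOrd X' i) else toLex (C + i, 0) with he
  have hmono : StrictMono e := by
    refine strictMono_nat_of_lt_succ ?_
    intro i
    by_cases hi1 : i + 1 < n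
    · have hi0 : i < n := by omega
      simp only [he, if_pos hi0, if_pos hi1]
      exact hOP _ (hmemX i hi0) _ (hmemX (i + 1) hi1)
        (nthOrd_strictMono hX' (Nat.lt_succ_self i))
    · by_cases hi0 : i < n
      · have hieq : i = n - 1 := by omega
        have hnne : n ≠ 0 := by omega
        simp only [he, if_pos hi0, if_neg hi1]
        show h (nthOrd X' i) < toLex (C + (i + 1), 0)
        have : h (nthOrd X' i) = toLex (ofLex (h (nthOrd X' i))) := rfl
        rw [this, Prod.Lex.lt_iff]
        left
        simp only [hC, if_neg hnne, hieq]
        simp only [ofLex_toLex]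
        omega
      · simp only [he, if_neg hi0, if_neg hi1]
        rw [Prod.Lex.lt_iff]
        left
        simp only [ofLex_toLex]
        omega
  set Y : Set Ord2 := Set.range e with hY
  have hYinf : Y.Infinite := Set.infinite_range_of_injective hmono.injective
  set g : Ord2 → Ord2 := fun α =>
    if hh : ∃ i, i < n ∧ nthOrd X' i = α then e (Classical.choose hh) else α with hgdef
  have hgn : ∀ i < n, g (nthOrd X' i) = nthOrd Y i := by
    intro i hi
    have hex : ∃ j, j < n ∧ nthOrd X' j = nthOrd X' i := ⟨i, hi, rfl⟩
    have hj := Classical.choose_spec hex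
    have hji : Classical.choose hex = i := (nthOrd_strictMono hX').injective hj.2
    rw [hY, nthOrd_range hmono]
    simp only [hgdef, dif_pos hex, hji]
  have hstrat := strat_congr hX' hYinf g n hgn φ le_rfl
  have hmaps : mapOps X h (stratify X' φ) = mapOps Set.univ g (stratify X' φ) := by
    refine mapOps_congr _ ?_
    intro α hα
    rw [hOn] at hα
    obtain ⟨i, hi, rfl⟩ := hα
    rw [if_pos (hmemX i hi), if_pos (Set.mem_univ _)]
    have hex : ∃ j, j < n ∧ nthOrd X' j = nthOrd X' i := ⟨i, hi, rfl⟩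
    have hj := Classical.choose_spec hex
    have hji : Classical.choose hex = i := (nthOrd_strictMono hX').injective hj.2
    simp only [hgdef, dif_pos hex, hji, he]
    rw [if_pos (show i < n from hi)]
  exact ⟨φ, hφT, stratify Y, ⟨Y, hYinf, rfl⟩, hmaps.trans hstrat.symm⟩

end FCT
end

section
/- Suppose ⁺ is a stratifier, X ⊆ ω·ω, h : X → ω·ω is order preserving, and φ is an L_EA-formula with On(φ⁺) ⊆ X. Then there is a stratifier * such that φ* ≡ h(φ⁺). -/
namespace FCT

lemma On_finite : ∀ ψ : LOO, ψ.On.Finite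
  | .eq _ _ => Set.finite_empty
  | .imp φ ψ => (On_finite φ).union (On_finite ψ)
  | .not φ => On_finite φ
  | .all _ φ => On_finite φ
  | .op α φ => (On_finite φ).insert α

lemma leastIn_spec {A : Set Ord2} (hA : A.Nonempty) :
    leastIn A ∈ A ∧ ∀ z ∈ A, leastIn A ≤ z := by
  obtain ⟨x, hx⟩ := hA
  set S : Set ℕ := {a : ℕ | ∃ b : ℕ, toLex (a, b) ∈ A} with hS
  have hSne : S.Nonempty := ⟨(ofLex x).1, (ofLex x).2, hx⟩
  set a := sInf S with ha
  have haS : a ∈ S := Nat.sInf_mem hSne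
  have hbne : {b : ℕ | toLex (a, b) ∈ A}.Nonempty := haS
  have hmem : leastIn A ∈ A := Nat.sInf_mem hbne
  refine ⟨hmem, ?_⟩
  intro z hz
  show toLex (a, sInf {b | toLex (a, b) ∈ A}) ≤ z
  have hz' : toLex ((ofLex z).1, (ofLex z).2) ∈ A := hz
  have h1 : a ≤ (ofLex z).1 := Nat.sInf_le ⟨(ofLex z).2, hz'⟩
  rcases lt_or_eq_of_le h1 with hlt | heq
  · show toLex (a, sInf {b | toLex (a, b) ∈ A}) ≤ toLex ((ofLex z).1, (ofLex z).2)
    exact Prod.Lex.le_iff.2 (Or.inl hlt)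
  · show toLex (a, sInf {b | toLex (a, b) ∈ A}) ≤ toLex ((ofLex z).1, (ofLex z).2)
    refine Prod.Lex.le_iff.2 (Or.inr ⟨heq, Nat.sInf_le ?_⟩)
    show toLex (a, (ofLex z).2) ∈ A
    rw [heq]; exact hz'

lemma leastIn_eq_s8 {A : Set Ord2} {a : Ord2} (ha : a ∈ A) (hmin : ∀ z ∈ A, a ≤ z) :
    leastIn A = a :=
  le_antisymm ((leastIn_spec ⟨a, ha⟩).2 a ha) (hmin _ (leastIn_spec ⟨a, ha⟩).1)

lemma On_stratify_subset {Y : Set Ord2} (hY : Y.Infinite) :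
    ∀ φ : LEA, (stratify Y φ).On ⊆ Y
  | .eq _ _ => by simp [stratify, Formula.On]
  | .imp φ ψ => by
      simp only [stratify, Formula.On]
      exact Set.union_subset (On_stratify_subset hY φ) (On_stratify_subset hY ψ)
  | .not φ => On_stratify_subset hY φ
  | .all _ φ => On_stratify_subset hY φ
  | .op _ φ => by
      simp only [stratify, Formula.On]
      refine Set.insert_subset
        ((leastIn_spec (hY.diff (On_finite _)).nonempty).1).1
        (On_stratify_subset hY φ)

lemma On_mapOps (X : Set Ord2) (h : Ord2 → Ord2) :
    ∀ ψ : LOO, ψ.On ⊆ X → (mapOps X h ψ).On = h '' ψ.On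
  | .eq _ _, _ => by simp [mapOps, Formula.On]
  | .imp φ ψ, hs => by
      simp only [mapOps, Formula.On]
      rw [On_mapOps X h φ (fun β hβ => hs (Or.inl hβ)),
        On_mapOps X h ψ (fun β hβ => hs (Or.inr hβ)), Set.image_union]
  | .not φ, hs => On_mapOps X h φ hs
  | .all _ φ, hs => On_mapOps X h φ hs
  | .op α φ, hs => by
      have hα : α ∈ X := hs (Set.mem_insert _ _)
      simp only [mapOps, Formula.On, if_pos hα,
        On_mapOps X h φ (fun β hβ => hs (Set.mem_insert_of_mem _ hβ)),
        Set.image_insert_eq]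

lemma stratify_eq_mapOps_key (Y X : Set Ord2) (hYinf : Y.Infinite) (h : Ord2 → Ord2)
    (A Z : Set Ord2) (hAY : A ⊆ Y) (hAX : A ⊆ X)
    (hmono : ∀ a ∈ X, ∀ b ∈ X, a ≤ b → h a ≤ h b)
    (hinj : ∀ a ∈ X, ∀ b ∈ X, h a = h b → a = b)
    (hZ1 : h '' A ⊆ Z) (hZ2 : ∀ z ∈ Z, z ∉ h '' A → ∀ γ ∈ A, h γ ≤ z) :
    ∀ φ : LEA, (stratify Y φ).On ⊆ A → stratify Z φ = mapOps X h (stratify Y φ)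
  | .eq _ _, _ => by simp [stratify, mapOps]
  | .imp φ ψ, hOn => by
      simp only [stratify, mapOps]
      rw [stratify_eq_mapOps_key Y X hYinf h A Z hAY hAX hmono hinj hZ1 hZ2 φ
          (fun β hβ => hOn (Or.inl hβ)),
        stratify_eq_mapOps_key Y X hYinf h A Z hAY hAX hmono hinj hZ1 hZ2 ψ
          (fun β hβ => hOn (Or.inr hβ))]
  | .not φ, hOn => by
      simp only [stratify, mapOps]
      rw [stratify_eq_mapOps_key Y X hYinf h A Z hAY hAX hmono hinj hZ1 hZ2 φ hOn]
  | .all x φ, hOn => by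
      simp only [stratify, mapOps]
      rw [stratify_eq_mapOps_key Y X hYinf h A Z hAY hAX hmono hinj hZ1 hZ2 φ hOn]
  | .op _ φ₀, hOn => by
      have hBA : (stratify Y φ₀).On ⊆ A := fun β hβ => hOn (Set.mem_insert_of_mem _ hβ)
      set B : Set Ord2 := (stratify Y φ₀).On with hB
      set α : Ord2 := leastIn (Y \ B) with hα
      have hYBne : (Y \ B).Nonempty := (hYinf.diff (On_finite _)).nonempty
      have hαmem : α ∈ Y \ B := (leastIn_spec hYBne).1
      have hαA : α ∈ A := hOn (Set.mem_insert _ _)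
      have ih : stratify Z φ₀ = mapOps X h (stratify Y φ₀) :=
        stratify_eq_mapOps_key Y X hYinf h A Z hAY hAX hmono hinj hZ1 hZ2 φ₀ hBA
      have hOnZ : (stratify Z φ₀).On = h '' B := by
        rw [ih, On_mapOps X h _ (fun β hβ => hAX (hBA hβ))]
      simp only [stratify, mapOps]
      rw [if_pos (hAX hαA), ← ih, hOnZ]
      congr 1
      apply leastIn_eq_s8
      · refine ⟨hZ1 ⟨α, hαA, rfl⟩, ?_⟩
        rintro ⟨γ, hγB, hγ⟩
        exact hαmem.2 (hinj γ (hAX (hBA hγB)) α (hAX hαA) hγ ▸ hγB)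
      · rintro z ⟨hzZ, hzB⟩
        by_cases hz : z ∈ h '' A
        · obtain ⟨γ, hγA, rfl⟩ := hz
          have hγB : γ ∉ B := fun hc => hzB ⟨γ, hc, rfl⟩
          have : α ≤ γ := (leastIn_spec hYBne).2 γ ⟨hAY hγA, hγB⟩
          exact hmono α (hAX hαA) γ (hAX hγA) this
        · exact hZ2 z hzZ hz α hαA

/-- If `⁺` is a stratifier, `h : X → ω·ω` is order preserving, and
`On(φ⁺) ⊆ X`, then there is a stratifier `*` with `φ* ≡ h(φ⁺)`. -/
theorem exists_stratifier_eq_mapOps (f : LEA → LOO) (hf : IsStratifier f)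
    (X : Set Ord2) (h : Ord2 → Ord2) (hh : OrdPresOn X h)
    (φ : LEA) (hφ : (f φ).On ⊆ X) :
    ∃ g : LEA → LOO, IsStratifier g ∧ g φ = mapOps X h (f φ) := by
  obtain ⟨Y, hYinf, rfl⟩ := hf
  set A : Set Ord2 := (stratify Y φ).On with hA
  have hAfin : A.Finite := On_finite _
  have hAY : A ⊆ Y := On_stratify_subset hYinf φ
  have hAX : A ⊆ X := hφ
  have hmono : ∀ a ∈ X, ∀ b ∈ X, a ≤ b → h a ≤ h b := by
    intro a ha b hb hab
    rcases lt_or_eq_of_le hab with hl | rfl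
    · exact (hh a ha b hb hl).le
    · exact le_rfl
  have hinj : ∀ a ∈ X, ∀ b ∈ X, h a = h b → a = b := by
    intro a ha b hb hab
    rcases lt_trichotomy a b with hl | he | hl
    · exact absurd hab (hh a ha b hb hl).ne
    · exact he
    · exact absurd hab.symm (hh b hb a ha hl).ne
  obtain ⟨M, hM⟩ : BddAbove (h '' A) := (hAfin.image h).bddAbove
  set Z : Set Ord2 := h '' A ∪ Set.Ioi M with hZdef
  have hZinf : Z.Infinite := by
    refine Set.Infinite.mono Set.subset_union_right ?_
    apply Set.infinite_of_injective_forall_mem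
      (f := fun n : ℕ => toLex ((ofLex M).1 + 1, n))
    · intro n m e
      simpa using congrArg (fun p : Ord2 => (ofLex p).2) e
    · intro n
      show M < toLex ((ofLex M).1 + 1, n)
      show toLex ((ofLex M).1, (ofLex M).2) < toLex ((ofLex M).1 + 1, n)
      exact Prod.Lex.lt_iff.2 (Or.inl (Nat.lt_succ_self _))
  refine ⟨stratify Z, ⟨Z, hZinf, rfl⟩, ?_⟩
  refine stratify_eq_mapOps_key Y X hYinf h A Z hAY hAX hmono hinj
    Set.subset_union_left ?_ φ subset_rfl
  intro z hzZ hz γ hγ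
  rcases hzZ with hc | hc
  · exact absurd hc hz
  · exact le_of_lt (lt_of_le_of_lt (hM ⟨γ, hγ, rfl⟩) hc)

end FCT
end

section
/- The Assigned Validity schema, consisting of all sentences φ^s where φ is a valid L_EA-formula and s is an assignment into ℕ, is upgeneric: for every L_EA-theory T containing Assigned Validity, 𝓜_{T^⊕} ⊨ (Assigned Validity)^⊕. -/
namespace FCT

section Aux

lemma varMatch_right_unique : ∀ (ρ : List (ℕ × ℕ)) {x y y' : ℕ},
    varMatch ρ x y → varMatch ρ x y' → y = y' := by
  intro ρ
  induction ρ with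
  | nil => intro x y y' h h'; simp only [varMatch] at h h'; omega
  | cons p ρ ih =>
    rcases p with ⟨a, b⟩
    intro x y y' h h'
    simp only [varMatch] at h h'
    rcases h with ⟨rfl, rfl⟩ | ⟨hxa, hyb, h⟩
    · rcases h' with ⟨-, rfl⟩ | ⟨hxa, -, -⟩
      · rfl
      · exact absurd rfl hxa
    · rcases h' with ⟨rfl, rfl⟩ | ⟨-, hyb', h'⟩
      · exact absurd rfl hxa
      · exact ih h h'

lemma varMatch_left_unique : ∀ (ρ : List (ℕ × ℕ)) {x x' y : ℕ},
    varMatch ρ x y → varMatch ρ x' y → x = x' := by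
  intro ρ
  induction ρ with
  | nil => intro x x' y h h'; simp only [varMatch] at h h'; omega
  | cons p ρ ih =>
    rcases p with ⟨a, b⟩
    intro x x' y h h'
    simp only [varMatch] at h h'
    rcases h with ⟨rfl, rfl⟩ | ⟨hxa, hyb, h⟩
    · rcases h' with ⟨rfl, -⟩ | ⟨-, hyb, -⟩
      · rfl
      · exact absurd rfl hyb
    · rcases h' with ⟨rfl, rfl⟩ | ⟨-, -, h'⟩
      · exact absurd rfl hyb
      · exact ih h h'

/-- A bound on the variables appearing in `ρ`. -/
def rhoMax (ρ : List (ℕ × ℕ)) : ℕ := ρ.foldr (fun p m => max (max (p.1 + 1) (p.2 + 1)) m) 0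

lemma rhoMax_cons (a b : ℕ) (ρ : List (ℕ × ℕ)) :
    rhoMax ((a, b) :: ρ) = max (max (a + 1) (b + 1)) (rhoMax ρ) := rfl

lemma varMatch_of_ge : ∀ (ρ : List (ℕ × ℕ)) {x y : ℕ},
    rhoMax ρ ≤ x → rhoMax ρ ≤ y → (varMatch ρ x y ↔ x = y) := by
  intro ρ
  induction ρ with
  | nil => intro x y _ _; simp [varMatch]
  | cons p ρ ih =>
    rcases p with ⟨a, b⟩
    intro x y hx hy
    rw [rhoMax_cons] at hx hy
    simp only [varMatch]
    constructor
    · rintro (⟨rfl, rfl⟩ | ⟨-, -, h⟩)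
      · omega
      · exact (ih (by omega) (by omega)).1 h
    · rintro rfl
      exact Or.inr ⟨by omega, by omega, (ih (by omega) (by omega)).2 rfl⟩

/-- A strict bound on all variables occurring in a term. -/
def Term.maxv : Term → ℕ
  | .var x => x + 1
  | .zero => 0
  | .succ t => t.maxv
  | .add t u => max t.maxv u.maxv
  | .mul t u => max t.maxv u.maxv

/-- A strict bound on all variables occurring in a formula (including binders). -/
def Formula.maxv {Op : Type} : Formula Op → ℕ
  | .eq t u => max t.maxv u.maxv
  | .imp φ ψ => max φ.maxv ψ.maxv
  | .not φ => φ.maxv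
  | .all x φ => max (x + 1) φ.maxv
  | .op _ φ => φ.maxv

lemma Term.lt_maxv {t : Term} {x : ℕ} (h : x ∈ t.vars) : x < t.maxv := by
  induction t with
  | var y => simp [Term.vars] at h; simp [Term.maxv]; omega
  | zero => simp [Term.vars] at h
  | succ t ih => exact ih h
  | add t u iht ihu =>
    rcases h with h | h
    · exact lt_of_lt_of_le (iht h) (le_max_left _ _)
    · exact lt_of_lt_of_le (ihu h) (le_max_right _ _)
  | mul t u iht ihu =>
    rcases h with h | h
    · exact lt_of_lt_of_le (iht h) (le_max_left _ _)
    · exact lt_of_lt_of_le (ihu h) (le_max_right _ _)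

lemma Formula.free_lt_maxv {Op : Type} {φ : Formula Op} {x : ℕ} (h : x ∈ φ.free) :
    x < φ.maxv := by
  induction φ with
  | eq t u =>
    rcases h with h | h
    · exact lt_of_lt_of_le (Term.lt_maxv h) (le_max_left _ _)
    · exact lt_of_lt_of_le (Term.lt_maxv h) (le_max_right _ _)
  | imp φ ψ ihφ ihψ =>
    rcases h with h | h
    · exact lt_of_lt_of_le (ihφ h) (le_max_left _ _)
    · exact lt_of_lt_of_le (ihψ h) (le_max_right _ _)
  | not φ ih => exact ih h
  | all y φ ih => exact lt_of_lt_of_le (ih h.1) (le_max_right _ _)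
  | op K φ ih => exact ih h

lemma Term.subst_not_mem {t : Term} {x : ℕ} {u : Term} (h : x ∉ t.vars) :
    Term.subst x u t = t := by
  induction t with
  | var y => simp [Term.vars] at h; simp [Term.subst]; omega
  | zero => rfl
  | succ t ih => simp only [Term.subst]; rw [ih h]
  | add t₁ t₂ ih₁ ih₂ =>
    simp only [Term.vars, Set.mem_union] at h
    push_neg at h
    simp only [Term.subst]; rw [ih₁ h.1, ih₂ h.2]
  | mul t₁ t₂ ih₁ ih₂ =>
    simp only [Term.vars, Set.mem_union] at h
    push_neg at h
    simp only [Term.subst]; rw [ih₁ h.1, ih₂ h.2]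

lemma Formula.subst_not_free {Op : Type} {φ : Formula Op} {x : ℕ} {u : Term}
    (h : x ∉ φ.free) : Formula.subst x u φ = φ := by
  induction φ with
  | eq t₁ t₂ =>
    simp only [Formula.free, Set.mem_union] at h
    push_neg at h
    simp only [Formula.subst]; rw [Term.subst_not_mem h.1, Term.subst_not_mem h.2]
  | imp φ ψ ihφ ihψ =>
    simp only [Formula.free, Set.mem_union] at h
    push_neg at h
    simp only [Formula.subst]; rw [ihφ h.1, ihψ h.2]
  | not φ ih =>
    simp only [Formula.free] at h
    simp only [Formula.subst]; rw [ih h]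
  | all y φ ih =>
    by_cases hxy : y = x
    · simp [Formula.subst, hxy]
    · simp only [Formula.subst, if_neg hxy]
      have hx : x ∉ φ.free := by
        intro hx
        exact h ⟨hx, by simp; omega⟩
      rw [ih hx]
  | op K φ ih =>
    simp only [Formula.free] at h
    simp only [Formula.subst]; rw [ih h]
lemma Term.vars_subst_var {t : Term} {x j : ℕ} :
    (Term.subst x (.var j) t).vars ⊆ (t.vars \ {x}) ∪ {j} := by
  induction t with
  | var y =>
    by_cases hyx : y = x
    · simp [Term.subst, hyx, Term.vars]
    · simp only [Term.subst, if_neg hyx]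
      intro z hz; simp only [Term.vars, Set.mem_singleton_iff] at hz; subst hz
      exact Or.inl ⟨rfl, hyx⟩
  | zero => simp [Term.subst, Term.vars]
  | succ t ih => exact ih
  | add t₁ t₂ ih₁ ih₂ =>
    intro z hz
    rcases hz with hz | hz
    · rcases ih₁ hz with ⟨h1, h2⟩ | h
      · exact Or.inl ⟨Or.inl h1, h2⟩
      · exact Or.inr h
    · rcases ih₂ hz with ⟨h1, h2⟩ | h
      · exact Or.inl ⟨Or.inr h1, h2⟩
      · exact Or.inr h
  | mul t₁ t₂ ih₁ ih₂ =>
    intro z hz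
    rcases hz with hz | hz
    · rcases ih₁ hz with ⟨h1, h2⟩ | h
      · exact Or.inl ⟨Or.inl h1, h2⟩
      · exact Or.inr h
    · rcases ih₂ hz with ⟨h1, h2⟩ | h
      · exact Or.inl ⟨Or.inr h1, h2⟩
      · exact Or.inr h

lemma Formula.free_subst_var {Op : Type} {φ : Formula Op} {x j : ℕ} :
    (Formula.subst x (.var j) φ).free ⊆ (φ.free \ {x}) ∪ {j} := by
  induction φ with
  | eq t₁ t₂ =>
    intro z hz
    rcases hz with hz | hz
    · rcases Term.vars_subst_var hz with ⟨h1, h2⟩ | h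
      · exact Or.inl ⟨Or.inl h1, h2⟩
      · exact Or.inr h
    · rcases Term.vars_subst_var hz with ⟨h1, h2⟩ | h
      · exact Or.inl ⟨Or.inr h1, h2⟩
      · exact Or.inr h
  | imp φ ψ ihφ ihψ =>
    intro z hz
    rcases hz with hz | hz
    · rcases ihφ hz with ⟨h1, h2⟩ | h
      · exact Or.inl ⟨Or.inl h1, h2⟩
      · exact Or.inr h
    · rcases ihψ hz with ⟨h1, h2⟩ | h
      · exact Or.inl ⟨Or.inr h1, h2⟩
      · exact Or.inr h
  | not φ ih => exact ih
  | all y φ ih =>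
    by_cases hyx : y = x
    · simp only [Formula.subst, if_pos hyx]
      intro z hz
      rcases hz with ⟨hz1, hz2⟩
      exact Or.inl ⟨⟨hz1, hz2⟩, by subst hyx; exact hz2⟩
    · simp only [Formula.subst, if_neg hyx]
      intro z hz
      rcases hz with ⟨hz1, hz2⟩
      rcases ih hz1 with ⟨h1, h2⟩ | h
      · exact Or.inl ⟨⟨h1, hz2⟩, h2⟩
      · exact Or.inr h
  | op K φ ih => exact ih

lemma Formula.substitutable_of_fresh {Op : Type} {φ : Formula Op} {x j : ℕ}
    (h : φ.maxv ≤ j) : Formula.Substitutable x (.var j) φ := by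
  induction φ with
  | eq t₁ t₂ => trivial
  | imp φ ψ ihφ ihψ =>
    exact ⟨ihφ (le_trans (le_max_left _ _) h), ihψ (le_trans (le_max_right _ _) h)⟩
  | not φ ih => exact ih h
  | all y φ ih =>
    refine Or.inr (Or.inr ⟨?_, ih (le_trans (le_max_right _ _) h)⟩)
    simp only [Formula.maxv] at h
    simp [Term.vars]
    omega
  | op K φ ih => exact ih h

lemma Term.maxv_subst_var {t : Term} {x j : ℕ} :
    (Term.subst x (.var j) t).maxv ≤ max t.maxv (j + 1) := by
  induction t with
  | var y =>
    by_cases hyx : y = x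
    · simp [Term.subst, hyx, Term.maxv]
    · simp [Term.subst, hyx, Term.maxv]
  | zero => simp [Term.subst, Term.maxv]
  | succ t ih => exact ih
  | add t₁ t₂ ih₁ ih₂ => simp only [Term.subst, Term.maxv]; omega
  | mul t₁ t₂ ih₁ ih₂ => simp only [Term.subst, Term.maxv]; omega

lemma Formula.maxv_subst_var {Op : Type} {φ : Formula Op} {x j : ℕ} :
    (Formula.subst x (.var j) φ).maxv ≤ max φ.maxv (j + 1) := by
  induction φ with
  | eq t₁ t₂ =>
    have h₁ := @Term.maxv_subst_var t₁ x j
    have h₂ := @Term.maxv_subst_var t₂ x j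
    simp only [Formula.subst, Formula.maxv]; omega
  | imp φ ψ ihφ ihψ => simp only [Formula.subst, Formula.maxv]; omega
  | not φ ih => exact ih
  | all y φ ih =>
    by_cases hyx : y = x
    · simp only [Formula.subst, if_pos hyx, Formula.maxv]; omega
    · simp only [Formula.subst, if_neg hyx, Formula.maxv]
      omega
  | op K φ ih => simp only [Formula.subst, Formula.maxv]; exact ih

/-- List of variables of a term. -/
def Term.vList : Term → List ℕ
  | .var x => [x]
  | .zero => []
  | .succ t => t.vList
  | .add t u => t.vList ++ u.vList
  | .mul t u => t.vList ++ u.vList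

/-- List of free variables of a formula. -/
def Formula.fvList {Op : Type} : Formula Op → List ℕ
  | .eq t u => t.vList ++ u.vList
  | .imp φ ψ => φ.fvList ++ ψ.fvList
  | .not φ => φ.fvList
  | .all x φ => φ.fvList.filter (· ≠ x)
  | .op _ φ => φ.fvList

lemma Term.mem_vList {t : Term} {x : ℕ} : x ∈ t.vList ↔ x ∈ t.vars := by
  induction t with
  | var y => simp [Term.vList, Term.vars]
  | zero => simp [Term.vList, Term.vars]
  | succ t ih => exact ih
  | add t₁ t₂ ih₁ ih₂ => simp [Term.vList, Term.vars, ih₁, ih₂]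
  | mul t₁ t₂ ih₁ ih₂ => simp [Term.vList, Term.vars, ih₁, ih₂]

lemma Formula.mem_fvList {Op : Type} {φ : Formula Op} {x : ℕ} :
    x ∈ φ.fvList ↔ x ∈ φ.free := by
  induction φ with
  | eq t₁ t₂ => simp [Formula.fvList, Formula.free, Term.mem_vList]
  | imp φ ψ ihφ ihψ => simp [Formula.fvList, Formula.free, ihφ, ihψ]
  | not φ ih => exact ih
  | all y φ ih =>
    simp only [Formula.fvList, List.mem_filter, ih, Formula.free, Set.mem_diff,
      Set.mem_singleton_iff, decide_eq_true_eq]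
  | op K φ ih => exact ih
lemma Term.alpha_numeral_self (ρ : List (ℕ × ℕ)) (n : ℕ) :
    (numeral n).alpha ρ (numeral n) := by
  induction n with
  | zero => trivial
  | succ n ih => exact ih

lemma Term.alpha_vars_exists : ∀ {t u : Term} {ρ : List (ℕ × ℕ)} {x : ℕ},
    t.alpha ρ u → x ∈ t.vars → ∃ y, varMatch ρ x y ∧ y ∈ u.vars := by
  intro t
  induction t with
  | var a =>
    intro u ρ x h hx
    cases u with
    | var b =>
      simp only [Term.vars, Set.mem_singleton_iff] at hx; subst hx
      exact ⟨b, h, by simp [Term.vars]⟩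
    | zero => exact absurd h id
    | succ _ => exact absurd h id
    | add _ _ => exact absurd h id
    | mul _ _ => exact absurd h id
  | zero => intro u ρ x h hx; simp [Term.vars] at hx
  | succ t ih =>
    intro u ρ x h hx
    cases u with
    | succ u => exact ih (u := u) h hx
    | var _ => exact absurd h id
    | zero => exact absurd h id
    | add _ _ => exact absurd h id
    | mul _ _ => exact absurd h id
  | add t₁ t₂ ih₁ ih₂ =>
    intro u ρ x h hx
    cases u with
    | add u₁ u₂ =>
      rcases hx with hx | hx
      · obtain ⟨y, hy, hy'⟩ := ih₁ h.1 hx; exact ⟨y, hy, Or.inl hy'⟩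
      · obtain ⟨y, hy, hy'⟩ := ih₂ h.2 hx; exact ⟨y, hy, Or.inr hy'⟩
    | var _ => exact absurd h id
    | zero => exact absurd h id
    | succ _ => exact absurd h id
    | mul _ _ => exact absurd h id
  | mul t₁ t₂ ih₁ ih₂ =>
    intro u ρ x h hx
    cases u with
    | mul u₁ u₂ =>
      rcases hx with hx | hx
      · obtain ⟨y, hy, hy'⟩ := ih₁ h.1 hx; exact ⟨y, hy, Or.inl hy'⟩
      · obtain ⟨y, hy, hy'⟩ := ih₂ h.2 hx; exact ⟨y, hy, Or.inr hy'⟩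
    | var _ => exact absurd h id
    | zero => exact absurd h id
    | succ _ => exact absurd h id
    | add _ _ => exact absurd h id

lemma Term.alpha_vars_exists' : ∀ {t u : Term} {ρ : List (ℕ × ℕ)} {y : ℕ},
    t.alpha ρ u → y ∈ u.vars → ∃ x, varMatch ρ x y ∧ x ∈ t.vars := by
  intro t
  induction t with
  | var a =>
    intro u ρ y h hy
    cases u with
    | var b =>
      simp only [Term.vars, Set.mem_singleton_iff] at hy; subst hy
      exact ⟨a, h, by simp [Term.vars]⟩
    | zero => exact absurd h id
    | succ _ => exact absurd h id
    | add _ _ => exact absurd h id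
    | mul _ _ => exact absurd h id
  | zero =>
    intro u ρ y h hy
    cases u with
    | zero => simp [Term.vars] at hy
    | var _ => exact absurd h id
    | succ _ => exact absurd h id
    | add _ _ => exact absurd h id
    | mul _ _ => exact absurd h id
  | succ t ih =>
    intro u ρ y h hy
    cases u with
    | succ u => exact ih (u := u) h hy
    | var _ => exact absurd h id
    | zero => exact absurd h id
    | add _ _ => exact absurd h id
    | mul _ _ => exact absurd h id
  | add t₁ t₂ ih₁ ih₂ =>
    intro u ρ y h hy
    cases u with
    | add u₁ u₂ =>
      rcases hy with hy | hy
      · obtain ⟨x, hx, hx'⟩ := ih₁ h.1 hy; exact ⟨x, hx, Or.inl hx'⟩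
      · obtain ⟨x, hx, hx'⟩ := ih₂ h.2 hy; exact ⟨x, hx, Or.inr hx'⟩
    | var _ => exact absurd h id
    | zero => exact absurd h id
    | succ _ => exact absurd h id
    | mul _ _ => exact absurd h id
  | mul t₁ t₂ ih₁ ih₂ =>
    intro u ρ y h hy
    cases u with
    | mul u₁ u₂ =>
      rcases hy with hy | hy
      · obtain ⟨x, hx, hx'⟩ := ih₁ h.1 hy; exact ⟨x, hx, Or.inl hx'⟩
      · obtain ⟨x, hx, hx'⟩ := ih₂ h.2 hy; exact ⟨x, hx, Or.inr hx'⟩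
    | var _ => exact absurd h id
    | zero => exact absurd h id
    | succ _ => exact absurd h id
    | add _ _ => exact absurd h id

lemma Formula.alpha_free_exists {Op : Type} : ∀ {φ ψ : Formula Op} {ρ : List (ℕ × ℕ)} {x : ℕ},
    φ.alpha ρ ψ → x ∈ φ.free → ∃ y, varMatch ρ x y ∧ y ∈ ψ.free := by
  intro φ
  induction φ with
  | eq t₁ t₂ =>
    intro ψ ρ x h hx
    cases ψ with
    | eq u₁ u₂ =>
      rcases hx with hx | hx
      · obtain ⟨y, hy, hy'⟩ := Term.alpha_vars_exists h.1 hx; exact ⟨y, hy, Or.inl hy'⟩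
      · obtain ⟨y, hy, hy'⟩ := Term.alpha_vars_exists h.2 hx; exact ⟨y, hy, Or.inr hy'⟩
    | imp _ _ => exact absurd h id
    | not _ => exact absurd h id
    | all _ _ => exact absurd h id
    | op _ _ => exact absurd h id
  | imp φ₁ φ₂ ih₁ ih₂ =>
    intro ψ ρ x h hx
    cases ψ with
    | imp ψ₁ ψ₂ =>
      rcases hx with hx | hx
      · obtain ⟨y, hy, hy'⟩ := ih₁ h.1 hx; exact ⟨y, hy, Or.inl hy'⟩
      · obtain ⟨y, hy, hy'⟩ := ih₂ h.2 hx; exact ⟨y, hy, Or.inr hy'⟩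
    | eq _ _ => exact absurd h id
    | not _ => exact absurd h id
    | all _ _ => exact absurd h id
    | op _ _ => exact absurd h id
  | not φ ih =>
    intro ψ ρ x h hx
    cases ψ with
    | not ψ => exact ih (ψ := ψ) h hx
    | eq _ _ => exact absurd h id
    | imp _ _ => exact absurd h id
    | all _ _ => exact absurd h id
    | op _ _ => exact absurd h id
  | all a φ ih =>
    intro ψ ρ x h hx
    cases ψ with
    | all b ψ =>
      obtain ⟨hx1, hx2⟩ := hx
      obtain ⟨y, hy, hy'⟩ := ih h hx1
      simp only [varMatch] at hy
      rcases hy with ⟨rfl, rfl⟩ | ⟨hxa, hyb, hy⟩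
      · exact absurd rfl hx2
      · exact ⟨y, hy, hy', hyb⟩
    | eq _ _ => exact absurd h id
    | imp _ _ => exact absurd h id
    | not _ => exact absurd h id
    | op _ _ => exact absurd h id
  | op K φ ih =>
    intro ψ ρ x h hx
    cases ψ with
    | op K' ψ => exact ih (ψ := ψ) h.2 hx
    | eq _ _ => exact absurd h id
    | imp _ _ => exact absurd h id
    | not _ => exact absurd h id
    | all _ _ => exact absurd h id

lemma Formula.alpha_free_exists' {Op : Type} : ∀ {φ ψ : Formula Op} {ρ : List (ℕ × ℕ)} {y : ℕ},
    φ.alpha ρ ψ → y ∈ ψ.free → ∃ x, varMatch ρ x y ∧ x ∈ φ.free := by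
  intro φ
  induction φ with
  | eq t₁ t₂ =>
    intro ψ ρ y h hy
    cases ψ with
    | eq u₁ u₂ =>
      rcases hy with hy | hy
      · obtain ⟨x, hx, hx'⟩ := Term.alpha_vars_exists' h.1 hy; exact ⟨x, hx, Or.inl hx'⟩
      · obtain ⟨x, hx, hx'⟩ := Term.alpha_vars_exists' h.2 hy; exact ⟨x, hx, Or.inr hx'⟩
    | imp _ _ => exact absurd h id
    | not _ => exact absurd h id
    | all _ _ => exact absurd h id
    | op _ _ => exact absurd h id
  | imp φ₁ φ₂ ih₁ ih₂ =>
    intro ψ ρ y h hy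
    cases ψ with
    | imp ψ₁ ψ₂ =>
      rcases hy with hy | hy
      · obtain ⟨x, hx, hx'⟩ := ih₁ h.1 hy; exact ⟨x, hx, Or.inl hx'⟩
      · obtain ⟨x, hx, hx'⟩ := ih₂ h.2 hy; exact ⟨x, hx, Or.inr hx'⟩
    | eq _ _ => exact absurd h id
    | not _ => exact absurd h id
    | all _ _ => exact absurd h id
    | op _ _ => exact absurd h id
  | not φ ih =>
    intro ψ ρ y h hy
    cases ψ with
    | not ψ => exact ih (ψ := ψ) h hy
    | eq _ _ => exact absurd h id
    | imp _ _ => exact absurd h id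
    | all _ _ => exact absurd h id
    | op _ _ => exact absurd h id
  | all a φ ih =>
    intro ψ ρ y h hy
    cases ψ with
    | all b ψ =>
      obtain ⟨hy1, hy2⟩ := hy
      obtain ⟨x, hx, hx'⟩ := ih h hy1
      simp only [varMatch] at hx
      rcases hx with ⟨rfl, rfl⟩ | ⟨hxa, hyb, hx⟩
      · exact absurd rfl hy2
      · exact ⟨x, hx, hx', hxa⟩
    | eq _ _ => exact absurd h id
    | imp _ _ => exact absurd h id
    | not _ => exact absurd h id
    | op _ _ => exact absurd h id
  | op K φ ih =>
    intro ψ ρ y h hy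
    cases ψ with
    | op K' ψ => exact ih (ψ := ψ) h.2 hy
    | eq _ _ => exact absurd h id
    | imp _ _ => exact absurd h id
    | not _ => exact absurd h id
    | all _ _ => exact absurd h id
lemma Term.alpha_mono : ∀ {t u : Term} {ρ ρ' : List (ℕ × ℕ)},
    (∀ x y, x ∈ t.vars → y ∈ u.vars → (varMatch ρ x y ↔ varMatch ρ' x y)) →
    t.alpha ρ u → t.alpha ρ' u := by
  intro t
  induction t with
  | var a =>
    intro u ρ ρ' hiff h
    cases u
    case var b => exact (hiff a b (by simp [Term.vars]) (by simp [Term.vars])).1 h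
    all_goals exact absurd h id
  | zero =>
    intro u ρ ρ' hiff h
    cases u
    case zero => trivial
    all_goals exact absurd h id
  | succ t ih =>
    intro u ρ ρ' hiff h
    cases u
    case succ u => exact ih (u := u) hiff h
    all_goals exact absurd h id
  | add t₁ t₂ ih₁ ih₂ =>
    intro u ρ ρ' hiff h
    cases u
    case add u₁ u₂ =>
      exact ⟨ih₁ (u := u₁) (fun x y hx hy => hiff x y (Or.inl hx) (Or.inl hy)) h.1,
             ih₂ (u := u₂) (fun x y hx hy => hiff x y (Or.inr hx) (Or.inr hy)) h.2⟩
    all_goals exact absurd h id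
  | mul t₁ t₂ ih₁ ih₂ =>
    intro u ρ ρ' hiff h
    cases u
    case mul u₁ u₂ =>
      exact ⟨ih₁ (u := u₁) (fun x y hx hy => hiff x y (Or.inl hx) (Or.inl hy)) h.1,
             ih₂ (u := u₂) (fun x y hx hy => hiff x y (Or.inr hx) (Or.inr hy)) h.2⟩
    all_goals exact absurd h id

lemma Formula.alpha_mono {Op : Type} : ∀ {φ ψ : Formula Op} {ρ ρ' : List (ℕ × ℕ)},
    (∀ x y, x ∈ φ.free → y ∈ ψ.free → (varMatch ρ x y ↔ varMatch ρ' x y)) →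
    φ.alpha ρ ψ → φ.alpha ρ' ψ := by
  intro φ
  induction φ with
  | eq t₁ t₂ =>
    intro ψ ρ ρ' hiff h
    cases ψ
    case eq u₁ u₂ =>
      exact ⟨Term.alpha_mono (fun x y hx hy => hiff x y (Or.inl hx) (Or.inl hy)) h.1,
             Term.alpha_mono (fun x y hx hy => hiff x y (Or.inr hx) (Or.inr hy)) h.2⟩
    all_goals exact absurd h id
  | imp φ₁ φ₂ ih₁ ih₂ =>
    intro ψ ρ ρ' hiff h
    cases ψ
    case imp ψ₁ ψ₂ =>
      exact ⟨ih₁ (ψ := ψ₁) (fun x y hx hy => hiff x y (Or.inl hx) (Or.inl hy)) h.1,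
             ih₂ (ψ := ψ₂) (fun x y hx hy => hiff x y (Or.inr hx) (Or.inr hy)) h.2⟩
    all_goals exact absurd h id
  | not φ ih =>
    intro ψ ρ ρ' hiff h
    cases ψ
    case not ψ => exact ih (ψ := ψ) hiff h
    all_goals exact absurd h id
  | all a φ ih =>
    intro ψ ρ ρ' hiff h
    cases ψ
    case all b ψ =>
      refine ih (ψ := ψ) ?_ h
      intro x y hx hy
      simp only [varMatch]
      constructor
      · rintro (⟨rfl, rfl⟩ | ⟨hxa, hyb, hm⟩)
        · exact Or.inl ⟨rfl, rfl⟩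
        · exact Or.inr ⟨hxa, hyb, (hiff x y ⟨hx, hxa⟩ ⟨hy, hyb⟩).1 hm⟩
      · rintro (⟨rfl, rfl⟩ | ⟨hxa, hyb, hm⟩)
        · exact Or.inl ⟨rfl, rfl⟩
        · exact Or.inr ⟨hxa, hyb, (hiff x y ⟨hx, hxa⟩ ⟨hy, hyb⟩).2 hm⟩
    all_goals exact absurd h id
  | op K φ ih =>
    intro ψ ρ ρ' hiff h
    cases ψ
    case op K' ψ => exact ⟨h.1, ih (ψ := ψ) hiff h.2⟩
    all_goals exact absurd h id

lemma Term.alpha_subst : ∀ {t u : Term} {ρ : List (ℕ × ℕ)} {x y j : ℕ},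
    t.alpha ρ u → varMatch ρ x y → rhoMax ρ ≤ j →
    (Term.subst x (.var j) t).alpha ρ (Term.subst y (.var j) u) := by
  intro t
  induction t with
  | var w =>
    intro u ρ x y j h hxy hj
    cases u
    case var w' =>
      by_cases hwx : w = x
      · subst hwx
        have : w' = y := varMatch_right_unique ρ h hxy
        subst this
        simp only [Term.subst, if_pos rfl]
        exact (varMatch_of_ge ρ hj hj).2 rfl
      · have hw'y : w' ≠ y := by
          intro he; subst he
          exact hwx (varMatch_left_unique ρ h hxy)
        simp only [Term.subst, if_neg hwx, if_neg hw'y]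
        exact h
    all_goals exact absurd h id
  | zero =>
    intro u ρ x y j h hxy hj
    cases u
    case zero => trivial
    all_goals exact absurd h id
  | succ t ih =>
    intro u ρ x y j h hxy hj
    cases u
    case succ u => exact ih (u := u) h hxy hj
    all_goals exact absurd h id
  | add t₁ t₂ ih₁ ih₂ =>
    intro u ρ x y j h hxy hj
    cases u
    case add u₁ u₂ => exact ⟨ih₁ (u := u₁) h.1 hxy hj, ih₂ (u := u₂) h.2 hxy hj⟩
    all_goals exact absurd h id
  | mul t₁ t₂ ih₁ ih₂ =>
    intro u ρ x y j h hxy hj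
    cases u
    case mul u₁ u₂ => exact ⟨ih₁ (u := u₁) h.1 hxy hj, ih₂ (u := u₂) h.2 hxy hj⟩
    all_goals exact absurd h id

lemma Formula.alpha_subst {Op : Type} : ∀ {φ ψ : Formula Op} {ρ : List (ℕ × ℕ)} {x y j : ℕ},
    φ.alpha ρ ψ → varMatch ρ x y → φ.maxv ≤ j → ψ.maxv ≤ j → rhoMax ρ ≤ j →
    (Formula.subst x (.var j) φ).alpha ρ (Formula.subst y (.var j) ψ) := by
  intro φ
  induction φ with
  | eq t₁ t₂ =>
    intro ψ ρ x y j h hxy hφ hψ hj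
    cases ψ
    case eq u₁ u₂ => exact ⟨Term.alpha_subst h.1 hxy hj, Term.alpha_subst h.2 hxy hj⟩
    all_goals exact absurd h id
  | imp φ₁ φ₂ ih₁ ih₂ =>
    intro ψ ρ x y j h hxy hφ hψ hj
    cases ψ
    case imp ψ₁ ψ₂ =>
      simp only [Formula.maxv, max_le_iff] at hφ hψ
      exact ⟨ih₁ (ψ := ψ₁) h.1 hxy hφ.1 hψ.1 hj, ih₂ (ψ := ψ₂) h.2 hxy hφ.2 hψ.2 hj⟩
    all_goals exact absurd h id
  | not φ ih =>
    intro ψ ρ x y j h hxy hφ hψ hj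
    cases ψ
    case not ψ => exact ih (ψ := ψ) h hxy hφ hψ hj
    all_goals exact absurd h id
  | all a φ ih =>
    intro ψ ρ x y j h hxy hφ hψ hj
    cases ψ
    case all b ψ =>
      have h' : φ.alpha ((a, b) :: ρ) ψ := h
      simp only [Formula.maxv, max_le_iff] at hφ hψ
      by_cases hax : a = x
      · by_cases hby : b = y
        · simp only [Formula.subst, if_pos hax, if_pos hby]
          exact h
        · have hyψ : y ∉ ψ.free := by
            intro hy
            obtain ⟨x', hx', hx'f⟩ := Formula.alpha_free_exists' h' hy
            simp only [varMatch] at hx'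
            rcases hx' with ⟨-, rfl⟩ | ⟨hx'a, -, hm⟩
            · exact hby rfl
            · exact hx'a ((varMatch_left_unique ρ hm hxy).trans hax.symm)
          simp only [Formula.subst, if_pos hax, if_neg hby]
          rw [Formula.subst_not_free hyψ]
          exact h
      · by_cases hby : b = y
        · have hxφ : x ∉ φ.free := by
            intro hx
            obtain ⟨y', hy', hy'f⟩ := Formula.alpha_free_exists h' hx
            simp only [varMatch] at hy'
            rcases hy' with ⟨rfl, -⟩ | ⟨-, hy'b, hm⟩
            · exact hax rfl
            · exact hy'b ((varMatch_right_unique ρ hm hxy).trans hby.symm)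
          simp only [Formula.subst, if_neg hax, if_pos hby]
          rw [Formula.subst_not_free hxφ]
          exact h
        · simp only [Formula.subst, if_neg hax, if_neg hby]
          refine ih (ψ := ψ) h' ?_ hφ.2 hψ.2 ?_
          · exact Or.inr ⟨fun he => hax he.symm, fun he => hby he.symm, hxy⟩
          · rw [rhoMax_cons]; omega
    all_goals exact absurd h id
  | op K φ ih =>
    intro ψ ρ x y j h hxy hφ hψ hj
    cases ψ
    case op K' ψ => exact ⟨h.1, ih (ψ := ψ) h.2 hxy hφ hψ hj⟩
    all_goals exact absurd h id
lemma Term.numSub_congr {t : Term} {s s' : ℕ → ℕ} {B : List ℕ}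
    (h : ∀ x ∈ t.vars, x ∉ B → s x = s' x) : t.numSub s B = t.numSub s' B := by
  induction t with
  | var y =>
    by_cases hy : y ∈ B
    · simp [Term.numSub, hy]
    · simp only [Term.numSub, if_neg hy]
      rw [h y (by simp [Term.vars]) hy]
  | zero => rfl
  | succ t ih => simp only [Term.numSub]; rw [ih (fun x hx => h x hx)]
  | add t₁ t₂ ih₁ ih₂ =>
    simp only [Term.numSub]
    rw [ih₁ (fun x hx => h x (Or.inl hx)), ih₂ (fun x hx => h x (Or.inr hx))]
  | mul t₁ t₂ ih₁ ih₂ =>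
    simp only [Term.numSub]
    rw [ih₁ (fun x hx => h x (Or.inl hx)), ih₂ (fun x hx => h x (Or.inr hx))]

lemma Formula.numSub_congr {Op : Type} : ∀ {φ : Formula Op} {s s' : ℕ → ℕ} {B : List ℕ},
    (∀ x ∈ φ.free, x ∉ B → s x = s' x) → φ.numSub s B = φ.numSub s' B := by
  intro φ
  induction φ with
  | eq t₁ t₂ =>
    intro s s' B h
    simp only [Formula.numSub]
    rw [Term.numSub_congr (fun x hx => h x (Or.inl hx)),
        Term.numSub_congr (fun x hx => h x (Or.inr hx))]
  | imp φ₁ φ₂ ih₁ ih₂ =>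
    intro s s' B h
    simp only [Formula.numSub]
    rw [ih₁ (fun x hx => h x (Or.inl hx)), ih₂ (fun x hx => h x (Or.inr hx))]
  | not φ ih =>
    intro s s' B h
    simp only [Formula.numSub]
    rw [ih (fun x hx => h x hx)]
  | all y φ ih =>
    intro s s' B h
    simp only [Formula.numSub]
    rw [ih (s := s) (s' := s') ?_]
    intro x hx hxB
    simp only [List.mem_cons, not_or] at hxB
    exact h x ⟨hx, hxB.1⟩ hxB.2
  | op K φ ih =>
    intro s s' B h
    simp only [Formula.numSub]
    rw [ih (fun x hx => h x hx)]

lemma Term.numSub_numeral {s : ℕ → ℕ} {B : List ℕ} (n : ℕ) :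
    (numeral n).numSub s B = numeral n := by
  induction n with
  | zero => rfl
  | succ n ih => simp only [numeral, Term.numSub]; rw [ih]

lemma Term.numSub_numSub {t : Term} {s s' : ℕ → ℕ} : ∀ {B C : List ℕ},
    (∀ x ∈ C, x ∈ B) →
    (t.numSub s B).numSub s' C = t.numSub (fun x => if x ∈ B then s' x else s x) C := by
  induction t with
  | var y =>
    intro B C hCB
    by_cases hyB : y ∈ B
    · by_cases hyC : y ∈ C
      · simp [Term.numSub, hyB, hyC]
      · simp [Term.numSub, hyB, hyC]
    · have hyC : y ∉ C := fun h => hyB (hCB y h)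
      simp only [Term.numSub, if_neg hyB, if_neg hyC]
      rw [Term.numSub_numeral]
      try simp [hyB]
  | zero => intro B C _; rfl
  | succ t ih => intro B C h; simp only [Term.numSub]; rw [ih h]
  | add t₁ t₂ ih₁ ih₂ => intro B C h; simp only [Term.numSub]; rw [ih₁ h, ih₂ h]
  | mul t₁ t₂ ih₁ ih₂ => intro B C h; simp only [Term.numSub]; rw [ih₁ h, ih₂ h]

lemma Formula.numSub_numSub {Op : Type} : ∀ {φ : Formula Op} {s s' : ℕ → ℕ} {B C : List ℕ},
    (∀ x ∈ C, x ∈ B) →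
    (φ.numSub s B).numSub s' C = φ.numSub (fun x => if x ∈ B then s' x else s x) C := by
  intro φ
  induction φ with
  | eq t₁ t₂ =>
    intro s s' B C h
    simp only [Formula.numSub]
    rw [Term.numSub_numSub h, Term.numSub_numSub h]
  | imp φ₁ φ₂ ih₁ ih₂ =>
    intro s s' B C h
    simp only [Formula.numSub]
    rw [ih₁ h, ih₂ h]
  | not φ ih =>
    intro s s' B C h
    simp only [Formula.numSub]
    rw [ih h]
  | all y φ ih =>
    intro s s' B C h
    simp only [Formula.numSub]
    have h' : ∀ x ∈ (y :: C), x ∈ (y :: B) := by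
      intro x hxm
      simp only [List.mem_cons] at hxm ⊢
      rcases hxm with rfl | hx
      · exact Or.inl rfl
      · exact Or.inr (h x hx)
    rw [ih h']
    congr 1
    apply Formula.numSub_congr
    intro x _ hxC
    simp only [List.mem_cons, not_or] at hxC
    simp only [List.mem_cons]
    by_cases hxB : x ∈ B
    · simp [hxB]
    · simp [hxB, hxC.1]
  | op K φ ih =>
    intro s s' B C h
    simp only [Formula.numSub]
    rw [ih h]

lemma Term.numSub_subst {t : Term} {x y : ℕ} {s : ℕ → ℕ} : ∀ {B : List ℕ},
    x ∉ B → y ∉ B →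
    (Term.subst x (.var y) t).numSub s B = t.numSub (Function.update s x (s y)) B := by
  induction t with
  | var w =>
    intro B hx hy
    by_cases hwx : w = x
    · subst hwx
      simp only [Term.subst, if_pos rfl, Term.numSub, if_neg hx, if_neg hy]
      simp [Function.update, Term.numSub, hy]
    · simp only [Term.subst, if_neg hwx, Term.numSub]
      by_cases hwB : w ∈ B
      · simp [hwB]
      · simp only [if_neg hwB]
        rw [Function.update_of_ne hwx]
  | zero => intro B _ _; rfl
  | succ t ih => intro B hx hy; simp only [Term.subst, Term.numSub]; rw [ih hx hy]
  | add t₁ t₂ ih₁ ih₂ =>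
    intro B hx hy; simp only [Term.subst, Term.numSub]; rw [ih₁ hx hy, ih₂ hx hy]
  | mul t₁ t₂ ih₁ ih₂ =>
    intro B hx hy; simp only [Term.subst, Term.numSub]; rw [ih₁ hx hy, ih₂ hx hy]

lemma Formula.numSub_subst {Op : Type} : ∀ {φ : Formula Op} {x y : ℕ} {s : ℕ → ℕ} {B : List ℕ},
    Formula.Substitutable x (.var y) φ → x ∉ B → y ∉ B →
    (Formula.subst x (.var y) φ).numSub s B = φ.numSub (Function.update s x (s y)) B := by
  intro φ
  induction φ with
  | eq t₁ t₂ =>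
    intro x y s B _ hx hy
    simp only [Formula.subst, Formula.numSub]
    rw [Term.numSub_subst hx hy, Term.numSub_subst hx hy]
  | imp φ₁ φ₂ ih₁ ih₂ =>
    intro x y s B hsub hx hy
    simp only [Formula.subst, Formula.numSub]
    rw [ih₁ hsub.1 hx hy, ih₂ hsub.2 hx hy]
  | not φ ih =>
    intro x y s B hsub hx hy
    simp only [Formula.subst, Formula.numSub]
    rw [ih hsub hx hy]
  | all z φ ih =>
    intro x y s B hsub hx hy
    by_cases hzx : z = x
    · subst hzx
      simp only [Formula.subst, if_pos rfl, ↓reduceIte, Formula.numSub]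
      congr 1
      apply Formula.numSub_congr
      intro w _ hwB
      simp only [List.mem_cons, not_or] at hwB
      rw [Function.update_of_ne hwB.1]
    · simp only [Formula.subst, if_neg hzx, Formula.numSub]
      rcases hsub with hsub | hsub | hsub
      · exact absurd hsub.symm hzx
      · rw [Formula.subst_not_free hsub]
        congr 1
        apply Formula.numSub_congr
        intro w hw _
        have : w ≠ x := fun he => hsub (he ▸ hw)
        rw [Function.update_of_ne this]
      · obtain ⟨hzy, hsub⟩ := hsub
        have hzy' : z ≠ y := by
          intro he; exact hzy (by simp [Term.vars, he])
        have hx' : x ∉ (z :: B) := by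
          simp only [List.mem_cons, not_or]
          exact ⟨fun he => hzx he.symm, hx⟩
        have hy' : y ∉ (z :: B) := by
          simp only [List.mem_cons, not_or]
          exact ⟨fun he => hzy' he.symm, hy⟩
        rw [ih hsub hx' hy']
  | op K φ ih =>
    intro x y s B hsub hx hy
    simp only [Formula.subst, Formula.numSub]
    rw [ih hsub hx hy]
def BInv (ρ : List (ℕ × ℕ)) (B₁ B₂ : List ℕ) : Prop :=
  ∀ x y, varMatch ρ x y → ((x ∈ B₁ ∧ y ∈ B₂) ∨ (x ∉ B₁ ∧ y ∉ B₂ ∧ x = y))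

lemma Term.numSub_alpha {s : ℕ → ℕ} : ∀ {t u : Term} {ρ : List (ℕ × ℕ)} {B₁ B₂ : List ℕ},
    t.alpha ρ u → BInv ρ B₁ B₂ → (t.numSub s B₁).alpha ρ (u.numSub s B₂) := by
  intro t
  induction t with
  | var w =>
    intro u ρ B₁ B₂ h hinv
    cases u
    case var w' =>
      rcases hinv w w' h with ⟨h1, h2⟩ | ⟨h1, h2, rfl⟩
      · simp only [Term.numSub, if_pos h1, if_pos h2]
        exact h
      · simp only [Term.numSub, if_neg h1, if_neg h2]
        exact Term.alpha_numeral_self ρ (s w)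
    all_goals exact absurd h id
  | zero =>
    intro u ρ B₁ B₂ h hinv
    cases u
    case zero => trivial
    all_goals exact absurd h id
  | succ t ih =>
    intro u ρ B₁ B₂ h hinv
    cases u
    case succ u => exact ih (u := u) h hinv
    all_goals exact absurd h id
  | add t₁ t₂ ih₁ ih₂ =>
    intro u ρ B₁ B₂ h hinv
    cases u
    case add u₁ u₂ => exact ⟨ih₁ (u := u₁) h.1 hinv, ih₂ (u := u₂) h.2 hinv⟩
    all_goals exact absurd h id
  | mul t₁ t₂ ih₁ ih₂ =>
    intro u ρ B₁ B₂ h hinv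
    cases u
    case mul u₁ u₂ => exact ⟨ih₁ (u := u₁) h.1 hinv, ih₂ (u := u₂) h.2 hinv⟩
    all_goals exact absurd h id

lemma Formula.numSub_alpha {Op : Type} {s : ℕ → ℕ} :
    ∀ {φ ψ : Formula Op} {ρ : List (ℕ × ℕ)} {B₁ B₂ : List ℕ},
    φ.alpha ρ ψ → BInv ρ B₁ B₂ → (φ.numSub s B₁).alpha ρ (ψ.numSub s B₂) := by
  intro φ
  induction φ with
  | eq t₁ t₂ =>
    intro ψ ρ B₁ B₂ h hinv
    cases ψ
    case eq u₁ u₂ => exact ⟨Term.numSub_alpha h.1 hinv, Term.numSub_alpha h.2 hinv⟩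
    all_goals exact absurd h id
  | imp φ₁ φ₂ ih₁ ih₂ =>
    intro ψ ρ B₁ B₂ h hinv
    cases ψ
    case imp ψ₁ ψ₂ => exact ⟨ih₁ (ψ := ψ₁) h.1 hinv, ih₂ (ψ := ψ₂) h.2 hinv⟩
    all_goals exact absurd h id
  | not φ ih =>
    intro ψ ρ B₁ B₂ h hinv
    cases ψ
    case not ψ => exact ih (ψ := ψ) h hinv
    all_goals exact absurd h id
  | all a φ ih =>
    intro ψ ρ B₁ B₂ h hinv
    cases ψ
    case all b ψ =>
      refine ih (ψ := ψ) h ?_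
      intro x y hm
      simp only [varMatch] at hm
      rcases hm with ⟨rfl, rfl⟩ | ⟨hxa, hyb, hm⟩
      · exact Or.inl ⟨List.mem_cons_self, List.mem_cons_self⟩
      · rcases hinv x y hm with ⟨h1, h2⟩ | ⟨h1, h2, rfl⟩
        · exact Or.inl ⟨List.mem_cons_of_mem _ h1, List.mem_cons_of_mem _ h2⟩
        · refine Or.inr ⟨?_, ?_, rfl⟩
          · simp only [List.mem_cons, not_or]; exact ⟨hxa, h1⟩
          · simp only [List.mem_cons, not_or]; exact ⟨hyb, h2⟩
    all_goals exact absurd h id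
  | op K φ ih =>
    intro ψ ρ B₁ B₂ h hinv
    cases ψ
    case op K' ψ => exact ⟨h.1, ih (ψ := ψ) h.2 hinv⟩
    all_goals exact absurd h id
lemma Formula.On_numSub : ∀ {φ : LOO} {s : ℕ → ℕ} {B : List ℕ}, (φ.numSub s B).On = φ.On := by
  intro φ
  induction φ with
  | eq t₁ t₂ => intro s B; rfl
  | imp φ₁ φ₂ ih₁ ih₂ => intro s B; simp only [Formula.numSub, Formula.On]; rw [ih₁, ih₂]
  | not φ ih => intro s B; simp only [Formula.numSub, Formula.On]; rw [ih]
  | all y φ ih => intro s B; simp only [Formula.numSub, Formula.On]; rw [ih]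
  | op K φ ih => intro s B; simp only [Formula.numSub, Formula.On]; rw [ih]

lemma Formula.On_subst : ∀ {φ : LOO} {x : ℕ} {u : Term}, (Formula.subst x u φ).On = φ.On := by
  intro φ
  induction φ with
  | eq t₁ t₂ => intro x u; rfl
  | imp φ₁ φ₂ ih₁ ih₂ => intro x u; simp only [Formula.subst, Formula.On]; rw [ih₁, ih₂]
  | not φ ih => intro x u; simp only [Formula.subst, Formula.On]; rw [ih]
  | all y φ ih =>
    intro x u
    by_cases hyx : y = x
    · simp only [Formula.subst, if_pos hyx]
    · simp only [Formula.subst, if_neg hyx, Formula.On]; rw [ih]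
  | op K φ ih => intro x u; simp only [Formula.subst, Formula.On]; rw [ih]

lemma stratify_numSub {X : Set Ord2} : ∀ {φ : LEA} {s : ℕ → ℕ} {B : List ℕ},
    stratify X (φ.numSub s B) = (stratify X φ).numSub s B := by
  intro φ
  induction φ with
  | eq t₁ t₂ => intro s B; rfl
  | imp φ₁ φ₂ ih₁ ih₂ => intro s B; simp only [Formula.numSub, stratify]; rw [ih₁, ih₂]
  | not φ ih => intro s B; simp only [Formula.numSub, stratify]; rw [ih]
  | all y φ ih => intro s B; simp only [Formula.numSub, stratify]; rw [ih]
  | op K φ ih =>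
    intro s B
    simp only [Formula.numSub, stratify]
    rw [ih, Formula.On_numSub]

lemma stratify_subst {X : Set Ord2} : ∀ {φ : LEA} {x : ℕ} {u : Term},
    stratify X (Formula.subst x u φ) = Formula.subst x u (stratify X φ) := by
  intro φ
  induction φ with
  | eq t₁ t₂ => intro x u; rfl
  | imp φ₁ φ₂ ih₁ ih₂ => intro x u; simp only [Formula.subst, stratify]; rw [ih₁, ih₂]
  | not φ ih => intro x u; simp only [Formula.subst, stratify]; rw [ih]
  | all y φ ih =>
    intro x u
    by_cases hyx : y = x
    · simp only [Formula.subst, if_pos hyx, stratify]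
    · simp only [Formula.subst, if_neg hyx, stratify]; rw [ih]
  | op K φ ih =>
    intro x u
    simp only [Formula.subst, stratify]
    rw [ih, Formula.On_subst]

lemma stratify_free {X : Set Ord2} : ∀ {φ : LEA}, (stratify X φ).free = φ.free := by
  intro φ
  induction φ with
  | eq t₁ t₂ => rfl
  | imp φ₁ φ₂ ih₁ ih₂ => simp only [stratify, Formula.free]; rw [ih₁, ih₂]
  | not φ ih => simp only [stratify, Formula.free]; rw [ih]
  | all y φ ih => simp only [stratify, Formula.free]; rw [ih]
  | op K φ ih => simp only [stratify, Formula.free]; rw [ih]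

lemma stratify_substitutable {X : Set Ord2} {x : ℕ} {u : Term} :
    ∀ {φ : LEA}, Formula.Substitutable x u φ → Formula.Substitutable x u (stratify X φ) := by
  intro φ
  induction φ with
  | eq t₁ t₂ => intro _; trivial
  | imp φ₁ φ₂ ih₁ ih₂ => intro h; exact ⟨ih₁ h.1, ih₂ h.2⟩
  | not φ ih => intro h; exact ih h
  | all y φ ih =>
    intro h
    rcases h with h | h | h
    · exact Or.inl h
    · exact Or.inr (Or.inl (by rw [stratify_free]; exact h))
    · exact Or.inr (Or.inr ⟨h.1, ih h.2⟩)
  | op K φ ih => intro h; exact ih h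

lemma stratify_alpha {X : Set Ord2} : ∀ {φ ψ : LEA} {ρ : List (ℕ × ℕ)},
    φ.alpha ρ ψ →
    (stratify X φ).alpha ρ (stratify X ψ) ∧ (stratify X φ).On = (stratify X ψ).On := by
  intro φ
  induction φ with
  | eq t₁ t₂ =>
    intro ψ ρ h
    cases ψ
    case eq u₁ u₂ => exact ⟨h, rfl⟩
    all_goals exact absurd h id
  | imp φ₁ φ₂ ih₁ ih₂ =>
    intro ψ ρ h
    cases ψ
    case imp ψ₁ ψ₂ =>
      obtain ⟨ha₁, hO₁⟩ := ih₁ (ψ := ψ₁) h.1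
      obtain ⟨ha₂, hO₂⟩ := ih₂ (ψ := ψ₂) h.2
      exact ⟨⟨ha₁, ha₂⟩, by simp only [stratify, Formula.On]; rw [hO₁, hO₂]⟩
    all_goals exact absurd h id
  | not φ ih =>
    intro ψ ρ h
    cases ψ
    case not ψ => exact ih (ψ := ψ) h
    all_goals exact absurd h id
  | all a φ ih =>
    intro ψ ρ h
    cases ψ
    case all b ψ =>
      obtain ⟨ha, hO⟩ := ih (ψ := ψ) h
      exact ⟨ha, hO⟩
    all_goals exact absurd h id
  | op K φ ih =>
    intro ψ ρ h
    cases ψ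
    case op K' ψ =>
      obtain ⟨ha, hO⟩ := ih (ψ := ψ) h.2
      constructor
      · exact ⟨by rw [hO], ha⟩
      · simp only [stratify, Formula.On]; rw [hO]
    all_goals exact absurd h id
lemma Term.eval_alpha {Op : Type} {M : PreStruc Op} :
    ∀ {t u : Term} {ρ : List (ℕ × ℕ)} {u₁ u₂ : ℕ → M.U},
    t.alpha ρ u → (∀ x y, varMatch ρ x y → u₁ x = u₂ y) →
    t.eval M u₁ = u.eval M u₂ := by
  intro t
  induction t with
  | var w =>
    intro u ρ u₁ u₂ h hu
    cases u
    case var w' => exact hu w w' h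
    all_goals exact absurd h id
  | zero =>
    intro u ρ u₁ u₂ h hu
    cases u
    case zero => rfl
    all_goals exact absurd h id
  | succ t ih =>
    intro u ρ u₁ u₂ h hu
    cases u
    case succ u => simp only [Term.eval]; rw [ih (u := u) h hu]
    all_goals exact absurd h id
  | add t₁ t₂ ih₁ ih₂ =>
    intro u ρ u₁ u₂ h hu
    cases u
    case add v₁ v₂ =>
      simp only [Term.eval]; rw [ih₁ (u := v₁) h.1 hu, ih₂ (u := v₂) h.2 hu]
    all_goals exact absurd h id
  | mul t₁ t₂ ih₁ ih₂ =>
    intro u ρ u₁ u₂ h hu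
    cases u
    case mul v₁ v₂ =>
      simp only [Term.eval]; rw [ih₁ (u := v₁) h.1 hu, ih₂ (u := v₂) h.2 hu]
    all_goals exact absurd h id

/-- Rename the variables in the list by fresh variables `j, j+1, …`. -/
def rens {Op : Type} : ℕ → List ℕ → Formula Op → Formula Op
  | _, [], φ => φ
  | j, x :: l, φ => rens (j + 1) l (Formula.subst x (.var j) φ)

/-- The corresponding reassignment. -/
def upds {Op : Type} (M : PreStruc Op) : ℕ → List ℕ → (ℕ → M.U) → (ℕ → M.U)
  | _, [], s => s
  | j, x :: l, s => Function.update (upds M (j + 1) l s) x (s j)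

lemma upds_noteq {Op : Type} {M : PreStruc Op} :
    ∀ (L : List ℕ) (j : ℕ) (s : ℕ → M.U) (v : ℕ), (∀ x ∈ L, x ≠ v) →
    upds M j L s v = s v := by
  intro L
  induction L with
  | nil => intro j s v _; rfl
  | cons a L ih =>
    intro j s v h
    have hav : a ≠ v := h a (List.mem_cons_self)
    simp only [upds]
    rw [Function.update_of_ne (fun he => hav he.symm)]
    exact ih (j + 1) s v (fun x hx => h x (List.mem_cons_of_mem _ hx))

lemma upds_val {Op : Type} {M : PreStruc Op} :
    ∀ (L : List ℕ) (j : ℕ) (s : ℕ → M.U) (w : ℕ → M.U),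
    (∀ (i : ℕ) (hi : i < L.length), s (j + i) = w (L.get ⟨i, hi⟩)) →
    ∀ x ∈ L, upds M j L s x = w x := by
  intro L
  induction L with
  | nil => intro j s w _ x hx; exact absurd hx (List.not_mem_nil)
  | cons a L ih =>
    intro j s w hs x hx
    by_cases hxa : x = a
    · subst hxa
      simp only [upds, Function.update_self]
      have := hs 0 (by simp)
      simpa using this
    · simp only [upds]
      rw [Function.update_of_ne hxa]
      rcases List.mem_cons.mp hx with rfl | hx'
      · exact absurd rfl hxa
      · refine ih (j + 1) s w ?_ x hx'
        intro i hi
        have := hs (i + 1) (by simpa using Nat.succ_lt_succ hi)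
        have harg : j + 1 + i = j + (i + 1) := by omega
        rw [harg]
        simpa using this

lemma rens_free {Op : Type} :
    ∀ (L : List ℕ) (j : ℕ) (φ : Formula Op) (y : ℕ), y ∈ (rens j L φ).free →
    (y ∈ φ.free ∧ y ∉ L) ∨ j ≤ y := by
  intro L
  induction L with
  | nil => intro j φ y hy; exact Or.inl ⟨hy, List.not_mem_nil⟩
  | cons x L ih =>
    intro j φ y hy
    rcases ih (j + 1) (Formula.subst x (.var j) φ) y hy with ⟨h1, h2⟩ | h
    · rcases Formula.free_subst_var h1 with ⟨h3, h4⟩ | h3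
      · refine Or.inl ⟨h3, ?_⟩
        simp only [List.mem_cons, not_or]
        exact ⟨h4, h2⟩
      · exact Or.inr (le_of_eq h3.symm)
    · exact Or.inr (by omega)

lemma opSat_rens {Op : Type} {M : PreStruc Op} (hM : IsStruc M) (K : Op) :
    ∀ (L : List ℕ) (j : ℕ) (φ : Formula Op) (s : ℕ → M.U),
    φ.maxv ≤ j → (∀ x ∈ L, x < j) →
    (M.opSat K (rens j L φ) s ↔ M.opSat K φ (upds M j L s)) := by
  intro L
  induction L with
  | nil => intro j φ s _ _; exact Iff.rfl
  | cons x L ih =>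
    intro j φ s hφ hL
    have hsub : Formula.Substitutable x (.var j) φ :=
      Formula.substitutable_of_fresh hφ
    have h1 : (Formula.subst x (.var j) φ).maxv ≤ j + 1 :=
      le_trans Formula.maxv_subst_var (by omega)
    have h2 : ∀ y ∈ L, y < j + 1 := fun y hy =>
      lt_trans (hL y (List.mem_cons_of_mem _ hy)) (by omega)
    have step := ih (j + 1) (Formula.subst x (.var j) φ) s h1 h2
    simp only [rens]
    rw [step]
    have h3 := hM.2.2 K φ x j (upds M (j + 1) L s) hsub
    rw [h3]
    have h4 : upds M (j + 1) L s j = s j := by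
      apply upds_noteq
      intro y hy
      exact Nat.ne_of_lt (hL y (List.mem_cons_of_mem _ hy))
    rw [h4]
    rfl
lemma rens_alpha {Op : Type} {ρ : List (ℕ × ℕ)} (σ : ℕ → ℕ) :
    ∀ (L : List ℕ) (j : ℕ) (φ ψ : Formula Op),
    φ.alpha ρ ψ → (∀ x ∈ L, varMatch ρ x (σ x)) →
    φ.maxv ≤ j → ψ.maxv ≤ j → rhoMax ρ ≤ j →
    (rens j L φ).alpha ρ (rens j (L.map σ) ψ) := by
  intro L
  induction L with
  | nil => intro j φ ψ h _ _ _ _; exact h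
  | cons x L ih =>
    intro j φ ψ h hm hφ hψ hρ
    simp only [List.map_cons, rens]
    refine ih (j + 1) _ _ ?_ ?_ ?_ ?_ ?_
    · exact Formula.alpha_subst h (hm x (List.mem_cons_self)) hφ hψ hρ
    · exact fun y hy => hm y (List.mem_cons_of_mem _ hy)
    · exact le_trans Formula.maxv_subst_var (by omega)
    · exact le_trans Formula.maxv_subst_var (by omega)
    · omega

lemma sat_alpha {Op : Type} {M : PreStruc Op} (hM : IsStruc M) :
    ∀ {φ ψ : Formula Op} {ρ : List (ℕ × ℕ)} {u₁ u₂ : ℕ → M.U},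
    φ.alpha ρ ψ → (∀ x y, varMatch ρ x y → u₁ x = u₂ y) →
    (Sat M φ u₁ ↔ Sat M ψ u₂) := by
  intro φ
  induction φ with
  | eq t₁ t₂ =>
    intro ψ ρ u₁ u₂ h hu
    cases ψ
    case eq v₁ v₂ =>
      simp only [Sat]
      rw [Term.eval_alpha h.1 hu, Term.eval_alpha h.2 hu]
    all_goals exact absurd h id
  | imp φ₁ φ₂ ih₁ ih₂ =>
    intro ψ ρ u₁ u₂ h hu
    cases ψ
    case imp ψ₁ ψ₂ =>
      simp only [Sat]
      rw [ih₁ (ψ := ψ₁) h.1 hu, ih₂ (ψ := ψ₂) h.2 hu]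
    all_goals exact absurd h id
  | not φ ih =>
    intro ψ ρ u₁ u₂ h hu
    cases ψ
    case not ψ =>
      simp only [Sat]
      rw [ih (ψ := ψ) h hu]
    all_goals exact absurd h id
  | all a φ ih =>
    intro ψ ρ u₁ u₂ h hu
    cases ψ
    case all b ψ =>
      simp only [Sat]
      refine forall_congr' (fun v => ?_)
      refine ih (ψ := ψ) h ?_
      intro x y hxy
      simp only [varMatch] at hxy
      rcases hxy with ⟨rfl, rfl⟩ | ⟨hxa, hyb, hxy⟩
      · simp
      · rw [Function.update_of_ne hxa, Function.update_of_ne hyb]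
        exact hu x y hxy
    all_goals exact absurd h id
  | op K φ ih =>
    intro ψ ρ u₁ u₂ h hu
    cases ψ
    case op K' ψ =>
      obtain ⟨rfl, hα⟩ : K = K' ∧ φ.alpha ρ ψ := h
      simp only [Sat]
      classical
      set n : ℕ := max (max φ.maxv ψ.maxv) (rhoMax ρ) with hn
      have hφn : φ.maxv ≤ n := le_trans (le_max_left _ _) (le_max_left _ _)
      have hψn : ψ.maxv ≤ n := le_trans (le_max_right _ _) (le_max_left _ _)
      have hρn : rhoMax ρ ≤ n := le_max_right _ _
      set σ : ℕ → ℕ := fun x => if h : ∃ y, varMatch ρ x y then h.choose else 0 with hσ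
      have hσ1 : ∀ x ∈ φ.free, varMatch ρ x (σ x) ∧ σ x ∈ ψ.free := by
        intro x hx
        obtain ⟨y, hy, hyf⟩ := Formula.alpha_free_exists hα hx
        have hex : ∃ y, varMatch ρ x y := ⟨y, hy⟩
        have hch : varMatch ρ x (σ x) := by
          simp only [hσ, dif_pos hex]
          exact hex.choose_spec
        have : σ x = y := varMatch_right_unique ρ hch hy
        exact ⟨hch, this ▸ hyf⟩
      set L₁ : List ℕ := φ.fvList with hL₁
      set L₂ : List ℕ := L₁.map σ with hL₂
      set s : ℕ → M.U :=
        fun v => if h : v - n < L₁.length ∧ n ≤ v then u₁ (L₁.get ⟨v - n, h.1⟩) else u₁ 0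
        with hs
      have hs1 : ∀ (i : ℕ) (hi : i < L₁.length), s (n + i) = u₁ (L₁.get ⟨i, hi⟩) := by
        intro i hi
        have h2 : n + i - n < L₁.length ∧ n ≤ n + i := ⟨by omega, by omega⟩
        simp only [hs, dif_pos h2]
        congr 1
        congr 1
        exact Fin.mk_eq_mk.mpr (by omega)
      have hmemL₁ : ∀ x, x ∈ L₁ ↔ x ∈ φ.free := fun x => Formula.mem_fvList
      have hL₁n : ∀ x ∈ L₁, x < n :=
        fun x hx => lt_of_lt_of_le (Formula.free_lt_maxv ((hmemL₁ x).1 hx)) hφn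
      have hL₂n : ∀ y ∈ L₂, y < n := by
        intro y hy
        simp only [hL₂, List.mem_map] at hy
        obtain ⟨x, hx, rfl⟩ := hy
        exact lt_of_lt_of_le (Formula.free_lt_maxv (hσ1 x ((hmemL₁ x).1 hx)).2) hψn
      -- step 1
      have e1 : M.opSat K φ u₁ ↔ M.opSat K φ (upds M n L₁ s) := by
        refine (hM.1 K φ (upds M n L₁ s) u₁ ?_).symm
        intro x hx
        exact upds_val L₁ n s u₁ hs1 x ((hmemL₁ x).2 hx)
      -- step 2
      have e2 : M.opSat K φ (upds M n L₁ s) ↔ M.opSat K (rens n L₁ φ) s :=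
        (opSat_rens hM K L₁ n φ s hφn hL₁n).symm
      -- step 3 : alpha variance
      have hal : (rens n L₁ φ).alpha ρ (rens n L₂ ψ) := by
        rw [hL₂]
        exact rens_alpha σ L₁ n φ ψ hα (fun x hx => (hσ1 x ((hmemL₁ x).1 hx)).1) hφn hψn hρn
      have hge1 : ∀ y ∈ (rens n L₁ φ).free, n ≤ y := by
        intro y hy
        rcases rens_free L₁ n φ y hy with ⟨h1, h2⟩ | h1
        · exact absurd ((hmemL₁ y).2 h1) h2
        · exact h1
      have hge2 : ∀ y ∈ (rens n L₂ ψ).free, n ≤ y := by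
        intro y hy
        rcases rens_free L₂ n ψ y hy with ⟨h1, h2⟩ | h1
        · exfalso
          apply h2
          simp only [hL₂, List.mem_map]
          obtain ⟨x, hx, hxf⟩ := Formula.alpha_free_exists' hα h1
          refine ⟨x, (hmemL₁ x).2 hxf, ?_⟩
          exact varMatch_right_unique ρ (hσ1 x hxf).1 hx
        · exact h1
      have hvar : (rens n L₁ φ).AlphaVariant (rens n L₂ ψ) := by
        refine Formula.alpha_mono ?_ hal
        intro x y hx hy
        rw [varMatch_of_ge ρ (le_trans hρn (hge1 x hx)) (le_trans hρn (hge2 y hy))]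
        simp [varMatch]
      have e3 : M.opSat K (rens n L₁ φ) s ↔ M.opSat K (rens n L₂ ψ) s :=
        hM.2.1 K _ _ s hvar
      -- step 4
      have e4 : M.opSat K (rens n L₂ ψ) s ↔ M.opSat K ψ (upds M n L₂ s) :=
        opSat_rens hM K L₂ n ψ s hψn hL₂n
      -- step 5
      have hs2 : ∀ (i : ℕ) (hi : i < L₂.length), s (n + i) = u₂ (L₂.get ⟨i, hi⟩) := by
        intro i hi
        have hi' : i < L₁.length := by
          have : L₂.length = L₁.length := by rw [hL₂, List.length_map]
          omega
        rw [hs1 i hi']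
        have hmem : L₁.get ⟨i, hi'⟩ ∈ L₁ := List.get_mem L₁ ⟨i, hi'⟩
        have hfree : L₁.get ⟨i, hi'⟩ ∈ φ.free := (hmemL₁ _).1 hmem
        have hgetmap : L₂.get ⟨i, hi⟩ = σ (L₁.get ⟨i, hi'⟩) := by
          simp [hL₂]
        rw [hgetmap]
        exact hu _ _ (hσ1 _ hfree).1
      have e5 : M.opSat K ψ (upds M n L₂ s) ↔ M.opSat K ψ u₂ := by
        refine hM.1 K ψ (upds M n L₂ s) u₂ ?_
        intro y hy
        have hyL₂ : y ∈ L₂ := by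
          simp only [hL₂, List.mem_map]
          obtain ⟨x, hx, hxf⟩ := Formula.alpha_free_exists' hα hy
          exact ⟨x, (hmemL₁ x).2 hxf, varMatch_right_unique ρ (hσ1 x hxf).1 hx⟩
        exact upds_val L₂ n s u₂ hs2 y hyL₂
      exact e1.trans (e2.trans (e3.trans (e4.trans e5)))
    all_goals exact absurd h id
lemma models_alphaVariant {Op : Type} {T₀ : Set (Formula Op)} {Φ₁ Φ₂ : Formula Op}
    (h : Φ₁.alpha [] Φ₂) : Models T₀ Φ₁ ↔ Models T₀ Φ₂ := by
  have key : ∀ (M' : PreStruc Op), IsStruc M' → ∀ u : ℕ → M'.U,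
      (Sat M' Φ₁ u ↔ Sat M' Φ₂ u) := by
    intro M' hM' u
    refine sat_alpha hM' h ?_
    intro x y hxy
    have hxy' : x = y := hxy
    rw [hxy']
  constructor
  · intro hm M' hM' hTh u
    exact (key M' hM' u).1 (hm M' hM' hTh u)
  · intro hm M' hM' hTh u
    exact (key M' hM' u).2 (hm M' hM' hTh u)

lemma upStruc_opSat (T' : Set LOO) (X : Set Ord2) (φ : LEA) (s : ℕ → ℕ) :
    (upStruc (MStruc T') (stratify X)).opSat () φ s ↔
      Models (cut T' (leastIn (X \ (stratify X φ).On))) (assignSub s (stratify X φ)) := by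
  simp only [upStruc, MStruc, stratify, Sat]

lemma isStruc_upStratify (T' : Set LOO) (X : Set Ord2) :
    IsStruc (upStruc (MStruc T') (stratify X)) := by
  refine ⟨?_, ?_, ?_⟩
  · intro K φ s t hagree
    cases K
    erw [upStruc_opSat, upStruc_opSat]
    have he : assignSub s (stratify X φ) = assignSub t (stratify X φ) := by
      apply Formula.numSub_congr
      intro x hx _
      exact hagree x (by rwa [stratify_free] at hx)
    rw [he]
  · intro K φ ψ s hvar
    cases K
    erw [upStruc_opSat, upStruc_opSat]
    obtain ⟨ha, hOn⟩ := stratify_alpha (X := X) hvar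
    rw [hOn]
    have hsub : (assignSub s (stratify X φ)).alpha [] (assignSub s (stratify X ψ)) := by
      apply Formula.numSub_alpha ha
      intro x y hxy
      have hxy' : x = y := hxy
      exact Or.inr ⟨List.not_mem_nil, List.not_mem_nil, hxy'⟩
    exact models_alphaVariant hsub
  · intro K φ x y s hsub
    cases K
    erw [upStruc_opSat, upStruc_opSat]
    have h1 : stratify X (Formula.subst x (.var y) φ) = Formula.subst x (.var y) (stratify X φ) :=
      stratify_subst
    have hOn : (stratify X (Formula.subst x (.var y) φ)).On = (stratify X φ).On := by
      rw [h1, Formula.On_subst]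
    rw [hOn]
    have he : assignSub s (stratify X (Formula.subst x (.var y) φ)) =
        assignSub (Function.update s x (s y)) (stratify X φ) := by
      rw [h1]
      exact Formula.numSub_subst (stratify_substitutable hsub)
        (List.not_mem_nil) (List.not_mem_nil)
    rw [he]
    rfl

lemma eval_upStruc (M : PreStruc Ord2) (f : LEA → LOO) :
    ∀ (t : Term) (s : ℕ → M.U), t.eval (upStruc M f) s = t.eval M s := by
  intro t
  induction t with
  | var x => intro s; rfl
  | zero => intro s; rfl
  | succ t ih => intro s; simp only [Term.eval]; rw [ih]; rfl
  | add t₁ t₂ ih₁ ih₂ => intro s; simp only [Term.eval]; rw [ih₁, ih₂]; rfl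
  | mul t₁ t₂ ih₁ ih₂ => intro s; simp only [Term.eval]; rw [ih₁, ih₂]; rfl

lemma sat_up (T' : Set LOO) (X : Set Ord2) :
    ∀ (χ : LEA) (s : ℕ → ℕ),
    Sat (upStruc (MStruc T') (stratify X)) χ s ↔ Sat (MStruc T') (stratify X χ) s := by
  intro χ
  induction χ with
  | eq t₁ t₂ =>
    intro s
    simp only [Sat, stratify]
    erw [eval_upStruc, eval_upStruc]
    rfl
  | imp φ₁ φ₂ ih₁ ih₂ =>
    intro s
    simp only [Sat, stratify]
    rw [ih₁ s, ih₂ s]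
  | not φ ih =>
    intro s
    simp only [Sat, stratify]
    rw [ih s]
  | all x φ ih =>
    intro s
    simp only [Sat, stratify]
    exact forall_congr' (fun a => ih _)
  | op K φ ih =>
    intro s
    simp only [Sat, stratify, upStruc]

lemma eval_numeral_upStratify (T' : Set LOO) (X : Set Ord2) (n : ℕ) (s : ℕ → ℕ) :
    Term.eval (upStruc (MStruc T') (stratify X)) s (numeral n) = n := by
  induction n with
  | zero => rfl
  | succ n ih => simp only [numeral, Term.eval]; rw [ih]; rfl

lemma eval_numSub_upStratify (T' : Set LOO) (X : Set Ord2) :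
    ∀ (tm : Term) (B : List ℕ) (s t : ℕ → ℕ),
    Term.eval (upStruc (MStruc T') (stratify X)) t (tm.numSub s B) =
      Term.eval (upStruc (MStruc T') (stratify X)) (fun x => if x ∈ B then t x else s x) tm := by
  intro tm
  induction tm with
  | var x =>
    intro B s t
    by_cases hx : x ∈ B
    · simp [Term.numSub, hx, Term.eval]
      rfl
    · simp only [Term.numSub, if_neg hx]
      rw [eval_numeral_upStratify]
      simp [Term.eval, hx]
      rfl
  | zero => intro B s t; rfl
  | succ tm ih => intro B s t; simp only [Term.numSub, Term.eval]; rw [ih]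
  | add t₁ t₂ ih₁ ih₂ => intro B s t; simp only [Term.numSub, Term.eval]; rw [ih₁, ih₂]
  | mul t₁ t₂ ih₁ ih₂ => intro B s t; simp only [Term.numSub, Term.eval]; rw [ih₁, ih₂]

lemma sat_numSub_upStratify (T' : Set LOO) (X : Set Ord2) :
    ∀ (χ : LEA) (B : List ℕ) (s t : ℕ → ℕ),
    Sat (upStruc (MStruc T') (stratify X)) (χ.numSub s B) t ↔
      Sat (upStruc (MStruc T') (stratify X)) χ (fun x => if x ∈ B then t x else s x) := by
  intro χ
  induction χ with
  | eq t₁ t₂ =>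
    intro B s t
    simp only [Formula.numSub, Sat]
    rw [eval_numSub_upStratify, eval_numSub_upStratify]
  | imp φ₁ φ₂ ih₁ ih₂ =>
    intro B s t
    simp only [Formula.numSub, Sat]
    rw [ih₁ B s t, ih₂ B s t]
  | not φ ih =>
    intro B s t
    simp only [Formula.numSub, Sat]
    rw [ih B s t]
  | all x φ ih =>
    intro B s t
    simp only [Formula.numSub, Sat]
    refine forall_congr' (fun a => ?_)
    erw [ih (x :: B) s (Function.update t x a)]
    have hf : (fun w => if w ∈ x :: B then Function.update t x a w else s w) =
        Function.update (fun w => if w ∈ B then t w else s w) x a := by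
      funext w
      by_cases hwx : w = x
      · subst hwx; simp
        erw [Function.update_self, Function.update_self]
      · erw [Function.update_of_ne hwx, Function.update_of_ne hwx]
        simp only [List.mem_cons]
        by_cases hwB : w ∈ B
        · simp [hwB]
        · simp [hwB, hwx]
    erw [hf]
    rfl
  | op K φ ih =>
    intro B s t
    cases K
    simp only [Formula.numSub, Sat]
    erw [upStruc_opSat T' X (φ.numSub s B) t,
        upStruc_opSat T' X φ (fun x => if x ∈ B then t x else s x)]
    have hOn : (stratify X (φ.numSub s B)).On = (stratify X φ).On := by
      rw [stratify_numSub, Formula.On_numSub]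
    rw [hOn]
    have he : assignSub t (stratify X (φ.numSub s B)) =
        assignSub (fun x => if x ∈ B then t x else s x) (stratify X φ) := by
      rw [stratify_numSub]
      unfold assignSub
      exact Formula.numSub_numSub (fun x hx => absurd hx (List.not_mem_nil))
    rw [he]
end Aux

/-- The Assigned Validity schema is upgeneric: for every `L_EA`-theory `T`
containing it, `𝓜_{T^⊕} ⊨ (Assigned Validity)^⊕`. -/
theorem assignedValidity_upgeneric : Upgeneric AssignedValidity := by
  intro T _ _ ψ hψ s'
  obtain ⟨χ, hχ, f, hf, rfl⟩ := hψ
  obtain ⟨φ, s, hval, rfl⟩ := hχ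
  obtain ⟨X, -, rfl⟩ := hf
  rw [← sat_up (oplus T) X (assignSub s φ) s']
  unfold assignSub
  rw [sat_numSub_upStratify (oplus T) X φ [] s s']
  have hfun : (fun x => if x ∈ ([] : List ℕ) then s' x else s x) = s := by
    funext x
    simp
    rfl
  erw [hfun]
  exact hval _ (isStruc_upStratify (oplus T) X) s

end FCT
end
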